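/- arXiv:2103.03560 — 4 statements merged into one kernel-verified Lean document; each statement's English description precedes it below -/
import Mathlib

section
/- There exists a constant C such that for any integer m ≥ 0 and any real x with |x| ≥ 2√(2m+1), the m-th Hermite function satisfies |h_m(x)| ≤ C e^{-x²/8}. -/
open Real MeasureTheory

set_option maxHeartbeats 1000000

section HermiteTailAux
open Polynomial

namespace HermiteTail

lemma derivative_hermite (n : ℕ) :
    derivative (hermite (n + 1)) = C ((n : ℤ) + 1) * hermite n := by
  induction n with
  | zero => simp [hermite_one]
  | succ n ih =>
    have h2 : hermite (n + 2) = X * hermite (n + 1) - C ((n : ℤ) + 1) * hermite n := by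
      rw [hermite_succ (n + 1), ih]
    have hc : (((n : ℕ) + 1 : ℕ) : ℤ) + 1 = ((n : ℤ) + 1) + 1 := by push_cast; ring
    rw [h2, derivative_sub, derivative_mul, derivative_X, one_mul, derivative_mul,
      derivative_C, zero_mul, zero_add, ih, hermite_succ n, hc]
    simp only [map_add, map_one]
    ring

lemma aeval_hermite_rec (n : ℕ) (y : ℝ) :
    (Polynomial.aeval y (hermite (n + 2)) : ℝ)
      = y * Polynomial.aeval y (hermite (n + 1)) - ((n : ℝ) + 1) * Polynomial.aeval y (hermite n) := by
  rw [hermite_succ (n + 1), derivative_hermite n]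
  simp [map_sub, map_mul, aeval_X]

lemma abs_aeval_hermite_le (n : ℕ) (y : ℝ) (hy : y ≠ 0) :
    |(Polynomial.aeval y (hermite n) : ℝ)| ≤ |y| ^ n * Real.exp ((n : ℝ) ^ 2 / (2 * y ^ 2)) := by
  have hy2 : (0 : ℝ) < y ^ 2 := by positivity
  induction n using Nat.twoStepInduction with
  | zero => simp
  | one =>
    simp only [hermite_one, aeval_X, pow_one, Nat.cast_one, one_pow]
    nlinarith [Real.one_le_exp (le_of_lt (show (0:ℝ) < 1 / (2 * y ^ 2) by positivity)),
      abs_nonneg y, Real.exp_pos (1 / (2 * y ^ 2))]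
  | more n ih1 ih2 =>
    have hrec := aeval_hermite_rec n y
    have htri : |(Polynomial.aeval y (hermite (n + 2)) : ℝ)|
        ≤ |y| * |(Polynomial.aeval y (hermite (n + 1)) : ℝ)|
          + ((n : ℝ) + 1) * |(Polynomial.aeval y (hermite n) : ℝ)| := by
      rw [hrec]
      calc |y * (Polynomial.aeval y (hermite (n + 1)) : ℝ)
            - ((n : ℝ) + 1) * Polynomial.aeval y (hermite n)|
          ≤ |y * (Polynomial.aeval y (hermite (n + 1)) : ℝ)|
            + |((n : ℝ) + 1) * Polynomial.aeval y (hermite n)| := abs_sub _ _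
        _ = |y| * |(Polynomial.aeval y (hermite (n + 1)) : ℝ)|
            + ((n : ℝ) + 1) * |(Polynomial.aeval y (hermite n) : ℝ)| := by
            rw [abs_mul, abs_mul, abs_of_nonneg (by positivity : (0:ℝ) ≤ (n : ℝ) + 1)]
    -- abbreviations
    set E1 := Real.exp (((n : ℝ) + 1) ^ 2 / (2 * y ^ 2)) with hE1
    have hE1pos : 0 < E1 := Real.exp_pos _
    have hmono : Real.exp ((n : ℝ) ^ 2 / (2 * y ^ 2)) ≤ E1 := by
      apply Real.exp_le_exp.mpr
      apply div_le_div_of_nonneg_right ?_ ?_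
      · nlinarith [Nat.cast_nonneg (α := ℝ) n]
      · positivity
    push_cast at ih1 ih2 ⊢
    set e2 := Real.exp ((2 * (n : ℝ) + 3) / (2 * y ^ 2)) with he2
    have hsplit : Real.exp (((n : ℝ) + 2) ^ 2 / (2 * y ^ 2)) = E1 * e2 := by
      rw [hE1, he2, ← Real.exp_add]
      congr 1
      field_simp
      ring
    have hlin : 1 + (2 * (n : ℝ) + 3) / (2 * y ^ 2) ≤ e2 := by
      have := Real.add_one_le_exp ((2 * (n : ℝ) + 3) / (2 * y ^ 2))
      rw [he2]; linarith
    have hlin2 : y ^ 2 + ((n : ℝ) + 1) ≤ y ^ 2 * e2 := by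
      have key := mul_le_mul_of_nonneg_left hlin hy2.le
      have hq : y ^ 2 * (1 + (2 * (n : ℝ) + 3) / (2 * y ^ 2)) = y ^ 2 + (2 * (n : ℝ) + 3) / 2 := by
        field_simp
      rw [hq] at key
      nlinarith [Nat.cast_nonneg (α := ℝ) n]
    have habs : |y| ^ (n + 2) = |y| ^ n * y ^ 2 := by rw [pow_add, sq_abs]
    rw [hsplit]
    calc |(Polynomial.aeval y (hermite (n + 2)) : ℝ)|
        ≤ |y| * |(Polynomial.aeval y (hermite (n + 1)) : ℝ)|
          + ((n : ℝ) + 1) * |(Polynomial.aeval y (hermite n) : ℝ)| := htri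
      _ ≤ |y| * (|y| ^ (n + 1) * E1) + ((n : ℝ) + 1) * (|y| ^ n * E1) := by
          gcongr
          exact ih1.trans (mul_le_mul_of_nonneg_left hmono (pow_nonneg (abs_nonneg y) n))
      _ = |y| ^ n * (y ^ 2 + ((n : ℝ) + 1)) * E1 := by
          rw [show |y| ^ (n + 1) = |y| ^ n * |y| from pow_succ _ _]
          have h : |y| * |y| = y ^ 2 := by rw [← sq_abs]; ring
          linear_combination (|y| ^ n * E1) * h
      _ ≤ |y| ^ n * (y ^ 2 * e2) * E1 := by
          gcongr
      _ = |y| ^ (n + 2) * (E1 * e2) := by rw [habs]; ring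

end HermiteTail

namespace HermiteTail

lemma exp_mul_pow_le (n : ℕ) : Real.exp 1 * ((n : ℝ) + 1) ^ (n + 2) ≤ ((n : ℝ) + 2) ^ (n + 2) := by
  have hpos : (0:ℝ) < (n : ℝ) + 2 := by positivity
  have h1 : (1:ℝ) - 1 / ((n:ℝ) + 2) ≤ Real.exp (-(1 / ((n:ℝ) + 2))) := by
    have := Real.add_one_le_exp (-(1 / ((n:ℝ) + 2))); linarith
  have h2 : ((n:ℝ) + 1) ≤ ((n:ℝ) + 2) * Real.exp (-(1 / ((n:ℝ) + 2))) := by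
    have key := mul_le_mul_of_nonneg_left h1 hpos.le
    have hq : ((n:ℝ) + 2) * (1 - 1 / ((n:ℝ) + 2)) = (n:ℝ) + 1 := by field_simp; ring
    rw [hq] at key; exact key
  have h3 : ((n:ℝ) + 1) ^ (n + 2) ≤ (((n:ℝ) + 2) * Real.exp (-(1 / ((n:ℝ) + 2)))) ^ (n + 2) :=
    pow_le_pow_left₀ (by positivity) h2 _
  have h4 : (Real.exp (-(1 / ((n:ℝ) + 2)))) ^ (n + 2) = Real.exp (-1) := by
    rw [← Real.exp_nat_mul]
    congr 1
    push_cast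
    field_simp
  calc Real.exp 1 * ((n : ℝ) + 1) ^ (n + 2)
      ≤ Real.exp 1 * ((((n:ℝ) + 2)) ^ (n+2) * Real.exp (-1)) := by
        rw [mul_pow, h4] at h3
        exact mul_le_mul_of_nonneg_left h3 (Real.exp_pos 1).le
    _ = ((n : ℝ) + 2) ^ (n + 2) := by
        rw [mul_comm, mul_assoc, ← Real.exp_add]
        simp

lemma factorial_le (n : ℕ) :
    (((n + 1).factorial : ℝ)) * Real.exp n ≤ ((n : ℝ) + 1) ^ (n + 2) := by
  induction n with
  | zero => simp
  | succ n ih =>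
    have key := exp_mul_pow_le n
    have hstep : (((n + 2).factorial : ℝ)) * Real.exp ((n:ℝ) + 1)
        = ((n:ℝ) + 2) * Real.exp 1 * (((n + 1).factorial : ℝ) * Real.exp n) := by
      rw [Nat.factorial_succ]
      push_cast
      rw [Real.exp_add]
      ring
    push_cast
    calc (((n + 2).factorial : ℝ)) * Real.exp ((n:ℝ) + 1)
        = ((n:ℝ) + 2) * Real.exp 1 * (((n + 1).factorial : ℝ) * Real.exp n) := hstep
      _ ≤ ((n:ℝ) + 2) * Real.exp 1 * (((n:ℝ) + 1) ^ (n + 2)) := by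
          have : (0:ℝ) ≤ ((n:ℝ) + 2) * Real.exp 1 := by positivity
          exact mul_le_mul_of_nonneg_left ih this
      _ = ((n:ℝ) + 2) * (Real.exp 1 * ((n:ℝ) + 1) ^ (n + 2)) := by ring
      _ ≤ ((n:ℝ) + 2) * ((n:ℝ) + 2) ^ (n + 2) := by
          exact mul_le_mul_of_nonneg_left key (by positivity)
      _ = ((n:ℝ) + 2) ^ (n + 3) := by rw [← pow_succ']
      _ = ((n:ℝ) + 1 + 1) ^ (n + 1 + 2) := by ring
  
lemma sixteen_ninths_le : (16:ℝ)/9 ≤ Real.exp (3/5) := by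
  have a1 : (21/20 : ℝ) ≤ Real.exp (1/20) := by
    have := Real.add_one_le_exp (1/20 : ℝ); linarith
  have a2 : ((21:ℝ)/20) ^ 12 ≤ (Real.exp (1/20)) ^ 12 := pow_le_pow_left₀ (by norm_num) a1 12
  have a3 : (Real.exp (1/20 : ℝ)) ^ 12 = Real.exp (3/5) := by
    rw [← Real.exp_nat_mul]; norm_num
  have a4 : (16:ℝ)/9 ≤ ((21:ℝ)/20) ^ 12 := by norm_num
  rw [a3] at a2
  linarith

lemma final_ineq (n : ℕ) :
    ((n:ℝ) + 1) * Real.exp (53 * ((n:ℝ) + 1) / 80) ≤ 9 * Real.exp n := by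
  have h3 : Real.exp (53/80 : ℝ) ≤ 3 :=
    le_trans (Real.exp_le_exp.mpr (by norm_num))
      (le_of_lt (lt_trans Real.exp_one_lt_d9 (by norm_num)))
  have h6 := Real.add_one_le_exp (27 * (n:ℝ) / 80)
  have hn : (0:ℝ) ≤ (n:ℝ) := Nat.cast_nonneg n
  have hmul : ((n:ℝ) + 1) * Real.exp (53/80) ≤ 9 * Real.exp (27 * (n:ℝ) / 80) := by
    nlinarith [Real.exp_pos (53/80 : ℝ)]
  have hsplitL : Real.exp (53 * ((n:ℝ) + 1) / 80)
      = Real.exp (53/80) * Real.exp (53 * (n:ℝ) / 80) := by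
    rw [← Real.exp_add]; congr 1; ring
  have hsplitR : Real.exp (n:ℝ)
      = Real.exp (27 * (n:ℝ) / 80) * Real.exp (53 * (n:ℝ) / 80) := by
    rw [← Real.exp_add]; congr 1; ring
  rw [hsplitL, hsplitR]
  calc ((n:ℝ) + 1) * (Real.exp (53/80) * Real.exp (53 * (n:ℝ) / 80))
      = (((n:ℝ) + 1) * Real.exp (53/80)) * Real.exp (53 * (n:ℝ) / 80) := by ring
    _ ≤ (9 * Real.exp (27 * (n:ℝ) / 80)) * Real.exp (53 * (n:ℝ) / 80) :=
        mul_le_mul_of_nonneg_right hmul (Real.exp_pos _).le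
    _ = 9 * (Real.exp (27 * (n:ℝ) / 80) * Real.exp (53 * (n:ℝ) / 80)) := by ring

end HermiteTail

namespace HermiteTail

lemma tail_main (m : ℕ) (t : ℝ) (ht2 : 8 * (m:ℝ) + 4 ≤ t ^ 2) :
    ((m.factorial : ℝ)) * Real.exp ((m:ℝ)/16) * (128 / (9 * t ^ 2)) ^ m ≤ 9 := by
  have htpos : (0:ℝ) < t ^ 2 := by nlinarith [Nat.cast_nonneg (α := ℝ) m]
  cases m with
  | zero => norm_num
  | succ n =>
    have hN : (0:ℝ) ≤ (n:ℝ) := Nat.cast_nonneg n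
    have hcast : ((n+1:ℕ):ℝ) = (n:ℝ)+1 := by push_cast; ring
    rw [hcast] at ht2 ⊢
    have s2 : 128 / (9 * t ^ 2) ≤ 16 / (9 * ((n:ℝ) + 1)) := by
      rw [div_le_div_iff₀ (by positivity) (by positivity)]
      nlinarith
    have s3 : (128 / (9 * t ^ 2)) ^ (n+1) ≤ (16 / (9 * ((n:ℝ) + 1))) ^ (n+1) :=
      pow_le_pow_left₀ (by positivity) s2 _
    have hP : (0:ℝ) < Real.exp (n:ℝ) * ((n:ℝ) + 1) ^ (n+1) := by positivity
    have step1 : ((n+1).factorial : ℝ) * Real.exp (((n:ℝ)+1)/16) * (128 / (9 * t^2)) ^ (n+1)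
        ≤ ((n+1).factorial : ℝ) * Real.exp (((n:ℝ)+1)/16) * (16 / (9*((n:ℝ)+1))) ^ (n+1) :=
      mul_le_mul_of_nonneg_left s3 (by positivity)
    refine step1.trans ?_
    rw [← mul_le_mul_iff_left₀ hP]
    have hpowmul : (16 / (9*((n:ℝ)+1))) ^ (n+1) * ((n:ℝ)+1) ^ (n+1) = ((16:ℝ)/9) ^ (n+1) := by
      rw [← mul_pow]; congr 1; field_simp
    have h169 : ((16:ℝ)/9) ^ (n+1) ≤ Real.exp (3 * ((n:ℝ)+1) / 5) := by
      have h1 := pow_le_pow_left₀ (by norm_num : (0:ℝ) ≤ 16/9) sixteen_ninths_le (n+1)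
      have h2 : (Real.exp (3/5 : ℝ)) ^ (n+1) = Real.exp (3 * ((n:ℝ)+1) / 5) := by
        rw [← Real.exp_nat_mul]; congr 1; push_cast; ring
      rw [h2] at h1; exact h1
    have hec : Real.exp (((n:ℝ)+1)/16) * Real.exp (3*((n:ℝ)+1)/5)
        = Real.exp (53*((n:ℝ)+1)/80) := by
      rw [← Real.exp_add]; congr 1; ring
    calc ((n+1).factorial : ℝ) * Real.exp (((n:ℝ)+1)/16) * (16/(9*((n:ℝ)+1)))^(n+1)
          * (Real.exp (n:ℝ) * ((n:ℝ)+1)^(n+1))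
        = (((n+1).factorial : ℝ) * Real.exp (n:ℝ)) * Real.exp (((n:ℝ)+1)/16)
          * ((16/(9*((n:ℝ)+1)))^(n+1) * ((n:ℝ)+1)^(n+1)) := by ring
      _ = (((n+1).factorial : ℝ) * Real.exp (n:ℝ)) * Real.exp (((n:ℝ)+1)/16)
          * ((16:ℝ)/9)^(n+1) := by rw [hpowmul]
      _ ≤ (((n:ℝ)+1)^(n+2)) * Real.exp (((n:ℝ)+1)/16) * Real.exp (3*((n:ℝ)+1)/5) := by
          apply mul_le_mul ?_ h169 (by positivity) (by positivity)
          exact mul_le_mul_of_nonneg_right (factorial_le n) (Real.exp_pos _).le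
      _ = ((n:ℝ)+1)^(n+1) * (((n:ℝ)+1) * Real.exp (53*((n:ℝ)+1)/80)) := by
          rw [mul_assoc, hec, pow_succ]; ring
      _ ≤ ((n:ℝ)+1)^(n+1) * (9 * Real.exp (n:ℝ)) :=
          mul_le_mul_of_nonneg_left (final_ineq n) (by positivity)
      _ = 9 * (Real.exp (n:ℝ) * ((n:ℝ)+1)^(n+1)) := by ring

end HermiteTail

end HermiteTailAux

/-- The `m`-th Hermite function: the `L²`-normalized eigenfunction of the harmonic
oscillator `-d²/dx² + x²` with eigenvalue `2m+1`. -/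
noncomputable def hermiteFunction (m : ℕ) (x : ℝ) : ℝ :=
  (Real.sqrt (2 ^ m * Nat.factorial m * Real.sqrt Real.pi))⁻¹ * (Real.sqrt 2) ^ m *
    (Polynomial.aeval (Real.sqrt 2 * x) (Polynomial.hermite m) : ℝ) * Real.exp (-x ^ 2 / 2)

open HermiteTail in
/-- There is a constant `C` such that for every `m` and every `x` with
`|x| ≥ 2√(2m+1)`, one has `|h_m(x)| ≤ C e^{-x²/8}`. -/
theorem hermite_pointwise_tail_bound :
    ∃ C > 0, ∀ (m : ℕ) (x : ℝ), 2 * Real.sqrt (2 * (m : ℝ) + 1) ≤ |x| →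
      |hermiteFunction m x| ≤ C * Real.exp (-x ^ 2 / 8) := by
  refine ⟨3, by norm_num, fun m x hx => ?_⟩
  have hS : (0:ℝ) ≤ 2 * (m:ℝ) + 1 := by positivity
  have hsq : Real.sqrt (2 * (m:ℝ) + 1) ^ 2 = 2 * (m:ℝ) + 1 := Real.sq_sqrt hS
  have h1s : (1:ℝ) ≤ Real.sqrt (2 * (m:ℝ) + 1) := by
    nlinarith [hsq, Real.sqrt_nonneg (2 * (m:ℝ) + 1), Nat.cast_nonneg (α := ℝ) m]
  have ht : (2:ℝ) ≤ |x| := le_trans (by linarith) hx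
  have htpos : (0:ℝ) < |x| := by linarith
  have hxne : x ≠ 0 := fun h => by simp [h] at htpos
  have ht2 : 8 * (m:ℝ) + 4 ≤ x ^ 2 := by
    nlinarith [Real.sqrt_nonneg (2 * (m:ℝ) + 1), sq_abs x]
  have hx2pos : (0:ℝ) < x ^ 2 := by positivity
  have hfacpos : (0:ℝ) < (m.factorial : ℝ) := by exact_mod_cast Nat.factorial_pos m
  -- decompose the absolute value
  have habs : |hermiteFunction m x| =
      (Real.sqrt (2 ^ m * m.factorial * Real.sqrt π))⁻¹ * (Real.sqrt 2) ^ m *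
        |(Polynomial.aeval (Real.sqrt 2 * x) (Polynomial.hermite m) : ℝ)| *
        Real.exp (-x ^ 2 / 2) := by
    unfold hermiteFunction
    rw [abs_mul, abs_mul, abs_mul,
      abs_of_nonneg (by positivity :
        (0:ℝ) ≤ (Real.sqrt (2 ^ m * (m.factorial : ℝ) * Real.sqrt π))⁻¹),
      abs_of_nonneg (by positivity : (0:ℝ) ≤ (Real.sqrt 2) ^ m),
      abs_of_nonneg (Real.exp_nonneg _)]
  -- coefficient bound
  have hsqrt2m : Real.sqrt ((2:ℝ) ^ m) = (Real.sqrt 2) ^ m := by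
    rw [show ((2:ℝ) ^ m) = ((Real.sqrt 2) ^ m) ^ 2 by
      rw [← pow_mul, mul_comm, pow_mul, Real.sq_sqrt (by norm_num : (0:ℝ) ≤ 2)]]
    exact Real.sqrt_sq (by positivity)
  have hπ : (1:ℝ) ≤ Real.sqrt π := by
    rw [show (1:ℝ) = Real.sqrt 1 from (Real.sqrt_one).symm]
    exact Real.sqrt_le_sqrt (by nlinarith [Real.pi_gt_three])
  have hbpos : (0:ℝ) < Real.sqrt (m.factorial : ℝ) := Real.sqrt_pos.mpr hfacpos
  have hspos : (0:ℝ) < (Real.sqrt 2) ^ m := by positivity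
  have hbs : Real.sqrt (m.factorial : ℝ) * (Real.sqrt 2) ^ m
      ≤ Real.sqrt ((2:ℝ) ^ m * m.factorial * Real.sqrt π) := by
    rw [← hsqrt2m, ← Real.sqrt_mul hfacpos.le]
    refine Real.sqrt_le_sqrt ?_
    have h := mul_le_mul_of_nonneg_left hπ
      (by positivity : (0:ℝ) ≤ (2:ℝ) ^ m * (m.factorial : ℝ))
    nlinarith [h]
  have hapos : (0:ℝ) < Real.sqrt ((2:ℝ) ^ m * m.factorial * Real.sqrt π) :=
    lt_of_lt_of_le (by positivity) hbs
  have hcoef : (Real.sqrt ((2:ℝ) ^ m * m.factorial * Real.sqrt π))⁻¹ * (Real.sqrt 2) ^ m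
      ≤ (Real.sqrt (m.factorial : ℝ))⁻¹ := by
    calc (Real.sqrt ((2:ℝ) ^ m * m.factorial * Real.sqrt π))⁻¹ * (Real.sqrt 2) ^ m
        ≤ (Real.sqrt (m.factorial : ℝ) * (Real.sqrt 2) ^ m)⁻¹ * (Real.sqrt 2) ^ m := by
          exact mul_le_mul_of_nonneg_right
            (inv_anti₀ (mul_pos hbpos hspos) hbs) hspos.le
      _ = (Real.sqrt (m.factorial : ℝ))⁻¹ := by
          rw [mul_inv, mul_assoc, inv_mul_cancel₀ hspos.ne', mul_one]
  -- polynomial bound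
  have hyne : Real.sqrt 2 * x ≠ 0 :=
    mul_ne_zero (ne_of_gt (Real.sqrt_pos.mpr (by norm_num))) hxne
  have hA := abs_aeval_hermite_le m (Real.sqrt 2 * x) hyne
  have hy2 : (Real.sqrt 2 * x) ^ 2 = 2 * x ^ 2 := by
    rw [mul_pow, Real.sq_sqrt (by norm_num : (0:ℝ) ≤ 2)]
  have hyabs : |Real.sqrt 2 * x| = Real.sqrt 2 * |x| := by
    rw [abs_mul, abs_of_nonneg (Real.sqrt_nonneg 2)]
  have hexp32 : ((m:ℝ)) ^ 2 / (2 * (2 * x ^ 2)) ≤ (m:ℝ) / 32 := by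
    rw [div_le_div_iff₀ (by positivity) (by norm_num)]
    nlinarith [mul_nonneg (sub_nonneg.mpr ht2) (Nat.cast_nonneg (α := ℝ) m),
      Nat.cast_nonneg (α := ℝ) m]
  have hA' : |(Polynomial.aeval (Real.sqrt 2 * x) (Polynomial.hermite m) : ℝ)|
      ≤ (Real.sqrt 2 * |x|) ^ m * Real.exp ((m:ℝ) / 32) := by
    refine hA.trans ?_
    rw [hyabs, hy2]
    exact mul_le_mul_of_nonneg_left (Real.exp_le_exp.mpr hexp32) (by positivity)
  -- exponential factor bound
  have hE' : Real.exp (-(3 * x ^ 2 / 8)) ≤ (m.factorial : ℝ) * (8 / (3 * x ^ 2)) ^ m := by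
    have h := Real.pow_div_factorial_le_exp (x := 3 * x ^ 2 / 8) (by positivity) m
    have hb : (0:ℝ) < (3 * x ^ 2 / 8) ^ m := by positivity
    have h2 : (3 * x ^ 2 / 8) ^ m ≤ Real.exp (3 * x ^ 2 / 8) * (m.factorial : ℝ) := by
      rw [div_le_iff₀ hfacpos] at h; exact h
    have h3 : ((8:ℝ) / (3 * x ^ 2)) ^ m = ((3 * x ^ 2 / 8) ^ m)⁻¹ := by
      rw [← inv_pow, inv_div]
    rw [Real.exp_neg, h3, ← div_eq_mul_inv, inv_eq_one_div,
      div_le_div_iff₀ (Real.exp_pos _) hb, one_mul]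
    nlinarith [h2]
  -- the quantity whose square we control
  obtain ⟨R, hR⟩ : ∃ R : ℝ, R = Real.sqrt (m.factorial : ℝ) * Real.exp ((m:ℝ) / 32)
      * (8 * Real.sqrt 2 / (3 * |x|)) ^ m := ⟨_, rfl⟩
  have hR0 : (0:ℝ) ≤ R := by rw [hR]; positivity
  have hRsq : R ^ 2 = (m.factorial : ℝ) * Real.exp ((m:ℝ) / 16) * (128 / (9 * x ^ 2)) ^ m := by
    rw [hR, mul_pow, mul_pow, Real.sq_sqrt hfacpos.le]
    have e1 : Real.exp ((m:ℝ) / 32) ^ 2 = Real.exp ((m:ℝ) / 16) := by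
      rw [sq, ← Real.exp_add]; congr 1; ring
    have e2 : ((8 * Real.sqrt 2 / (3 * |x|)) ^ m) ^ 2 = (128 / (9 * x ^ 2)) ^ m := by
      rw [← pow_mul, mul_comm m 2, pow_mul]
      congr 1
      rw [div_pow, mul_pow, mul_pow, Real.sq_sqrt (by norm_num : (0:ℝ) ≤ 2), sq_abs]
      norm_num
    rw [e1, e2]
  have hR3 : R ≤ 3 := by
    have h9 : R ^ 2 ≤ 9 := by rw [hRsq]; exact tail_main m x ht2
    nlinarith [h9, hR0]
  -- put it together
  have hQ : (Real.sqrt (m.factorial : ℝ))⁻¹ * ((Real.sqrt 2 * |x|) ^ m * Real.exp ((m:ℝ) / 32))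
      * Real.exp (-(3 * x ^ 2 / 8)) ≤ 3 := by
    calc (Real.sqrt (m.factorial : ℝ))⁻¹ * ((Real.sqrt 2 * |x|) ^ m * Real.exp ((m:ℝ) / 32))
          * Real.exp (-(3 * x ^ 2 / 8))
        ≤ (Real.sqrt (m.factorial : ℝ))⁻¹ * ((Real.sqrt 2 * |x|) ^ m * Real.exp ((m:ℝ) / 32))
          * ((m.factorial : ℝ) * (8 / (3 * x ^ 2)) ^ m) :=
          mul_le_mul_of_nonneg_left hE' (by positivity)
      _ = R := by
          rw [hR]
          have hss : ((m.factorial : ℝ)) = Real.sqrt (m.factorial : ℝ)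
              * Real.sqrt (m.factorial : ℝ) := (Real.mul_self_sqrt hfacpos.le).symm
          have hx2 : x ^ 2 = |x| * |x| := by rw [← sq_abs]; ring
          have hc2 : (Real.sqrt 2 * |x|) ^ m * ((8:ℝ) / (3 * x ^ 2)) ^ m
              = (8 * Real.sqrt 2 / (3 * |x|)) ^ m := by
            rw [← mul_pow]; congr 1; rw [hx2]; field_simp
          rw [hss, ← hc2]
          field_simp
          rw [Real.sqrt_sq (Real.sqrt_nonneg _)]
      _ ≤ 3 := hR3
  have hsplit : Real.exp (-x ^ 2 / 2)
      = Real.exp (-(3 * x ^ 2 / 8)) * Real.exp (-x ^ 2 / 8) := by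
    rw [← Real.exp_add]; congr 1; ring
  calc |hermiteFunction m x|
      = (Real.sqrt (2 ^ m * m.factorial * Real.sqrt π))⁻¹ * (Real.sqrt 2) ^ m *
        |(Polynomial.aeval (Real.sqrt 2 * x) (Polynomial.hermite m) : ℝ)| *
        Real.exp (-x ^ 2 / 2) := habs
    _ ≤ (Real.sqrt (m.factorial : ℝ))⁻¹ * ((Real.sqrt 2 * |x|) ^ m * Real.exp ((m:ℝ) / 32))
        * Real.exp (-x ^ 2 / 2) := by
        exact mul_le_mul_of_nonneg_right
          (mul_le_mul hcoef hA' (abs_nonneg _) (by positivity)) (Real.exp_nonneg _)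
    _ = ((Real.sqrt (m.factorial : ℝ))⁻¹ * ((Real.sqrt 2 * |x|) ^ m * Real.exp ((m:ℝ) / 32))
        * Real.exp (-(3 * x ^ 2 / 8))) * Real.exp (-x ^ 2 / 8) := by
        rw [hsplit]; ring
    _ ≤ 3 * Real.exp (-x ^ 2 / 8) :=
        mul_le_mul_of_nonneg_right hQ (Real.exp_nonneg _)
end

section
/- Let α > 0 and m, n ∈ ℕ with √(2n+1) ≤ (α/4)√(2m+1). Then ∫_ℝ h_m(x)² h_n(αx)² dx ≤ C / (α √(2m+1)) for a universal constant C. -/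
open Real MeasureTheory

open Polynomial





noncomputable def Pm (m : ℕ) : Polynomial ℝ := (Polynomial.hermite m).map (Int.castRingHom ℝ)

lemma Pm_zero : Pm 0 = 1 := by simp [Pm]

lemma Pm_succ (m : ℕ) : Pm (m + 1) = X * Pm m - derivative (Pm m) := by
  simp [Pm, Polynomial.hermite_succ, Polynomial.derivative_map]

lemma derivative_Pm (m : ℕ) : derivative (Pm (m + 1)) = C ((m : ℝ) + 1) * Pm m := by
  induction m with
  | zero =>
    rw [Pm_succ, Pm_zero]
    simp
  | succ k ih =>
    rw [Pm_succ (k + 1), derivative_sub, derivative_mul, derivative_X, one_mul, ih,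
      derivative_C_mul, Pm_succ k]
    push_cast
    simp only [C_add, C_1]
    ring

lemma X_mul_derivative_Pm (m : ℕ) :
    X * derivative (Pm m) - derivative (derivative (Pm m)) = C (m : ℝ) * Pm m := by
  cases m with
  | zero => simp [Pm_zero]
  | succ k =>
    rw [derivative_Pm, derivative_C_mul, Pm_succ]
    push_cast
    simp only [C_add, C_1]
    ring

lemma Pm_comp_neg (m : ℕ) : (Pm m).comp (-X) = (-1) ^ m * Pm m := by
  induction m with
  | zero => simp [Pm_zero]
  | succ k ih =>
    have hd : (derivative (Pm k)).comp (-X) = -((-1) ^ k * derivative (Pm k)) := by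
      have := congrArg derivative ih
      rw [Polynomial.derivative_comp] at this
      simp only [derivative_neg, derivative_X, derivative_mul, derivative_pow] at this
      have h1 : (-1 : ℝ[X]) * (derivative (Pm k)).comp (-X) =
          (-1) ^ k * derivative (Pm k) := by
        simpa using this
      have h2 := congrArg (fun p => (-1 : ℝ[X]) * p) h1
      simp only [neg_mul, one_mul, neg_neg] at h2
      exact h2
    rw [Pm_succ, sub_comp, mul_comp, X_comp, ih, hd]
    ring
section Part2

open Filter Topology

lemma integrable_poly_gauss (r : Polynomial ℝ) {b : ℝ} (hb : 0 < b) :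
    Integrable fun x : ℝ => r.eval x * Real.exp (-b * x ^ 2) := by
  induction r using Polynomial.induction_on' with
  | add p q hp hq =>
    exact (hp.add hq).congr (Filter.Eventually.of_forall fun x => by simp [add_mul])
  | monomial n c =>
    have hn : (-1 : ℝ) < (n : ℝ) := lt_of_lt_of_le neg_one_lt_zero (Nat.cast_nonneg n)
    have h := integrable_rpow_mul_exp_neg_mul_sq hb hn
    simp_rw [Real.rpow_natCast] at h
    have h2 := h.const_mul c
    refine h2.congr (Filter.Eventually.of_forall fun x => ?_)
    simp [eval_monomial]
    ring

lemma tendsto_poly_gauss_top (r : Polynomial ℝ) {b : ℝ} (hb : 0 < b) :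
    Tendsto (fun x : ℝ => r.eval x * Real.exp (-b * x ^ 2)) atTop (𝓝 0) := by
  have h1 : Tendsto (fun x : ℝ => x - b * x ^ 2) atTop atBot := by
    apply tendsto_atBot_mono' _ _ tendsto_neg_atTop_atBot
    filter_upwards [eventually_ge_atTop (2 / b), eventually_ge_atTop 0] with x hx hx0
    have h2b : 2 ≤ x * b := (div_le_iff₀ hb).mp hx
    nlinarith [mul_le_mul_of_nonneg_left h2b hx0]
  have h2 : Tendsto (fun x : ℝ => Real.exp (x - b * x ^ 2)) atTop (𝓝 0) :=
    Real.tendsto_exp_atBot.comp h1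
  have h3 := (r.tendsto_div_exp_atTop).mul h2
  rw [zero_mul] at h3
  refine h3.congr fun x => ?_
  rw [div_mul_eq_mul_div, mul_div_assoc, ← Real.exp_sub]
  congr 1
  ring

lemma tendsto_poly_gauss_bot (r : Polynomial ℝ) {b : ℝ} (hb : 0 < b) :
    Tendsto (fun x : ℝ => r.eval x * Real.exp (-b * x ^ 2)) atBot (𝓝 0) := by
  have htop := tendsto_poly_gauss_top (r.comp (-X)) hb
  have h := htop.comp tendsto_neg_atBot_atTop
  refine h.congr fun x => ?_
  simp [Function.comp, eval_comp]

noncomputable def κm (m : ℕ) : ℝ :=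
  (Real.sqrt (2 ^ m * Nat.factorial m * Real.sqrt Real.pi))⁻¹ * (Real.sqrt 2) ^ m

noncomputable def Dz (p : Polynomial ℝ) : Polynomial ℝ :=
  C (Real.sqrt 2) * derivative p - C ((Real.sqrt 2)⁻¹) * (X * p)

noncomputable def hderiv (m : ℕ) (x : ℝ) : ℝ :=
  κm m * (Dz (Pm m)).eval (Real.sqrt 2 * x) * Real.exp (-x ^ 2 / 2)

lemma sqrt2_pos : (0 : ℝ) < Real.sqrt 2 := Real.sqrt_pos.mpr (by norm_num)

lemma sqrt2_mul_self : Real.sqrt 2 * Real.sqrt 2 = 2 := Real.mul_self_sqrt (by norm_num)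

lemma hermiteFunction_eq (m : ℕ) (x : ℝ) :
    hermiteFunction m x = κm m * (Pm m).eval (Real.sqrt 2 * x) * Real.exp (-x ^ 2 / 2) := by
  simp only [hermiteFunction, κm, Pm, Polynomial.aeval_def, Polynomial.eval₂_eq_eval_map,
    algebraMap_int_eq]

lemma eval_Dz (p : Polynomial ℝ) (x : ℝ) :
    (Dz p).eval (Real.sqrt 2 * x) =
      Real.sqrt 2 * (derivative p).eval (Real.sqrt 2 * x) - x * p.eval (Real.sqrt 2 * x) := by
  have h2 : Real.sqrt 2 ≠ 0 := ne_of_gt sqrt2_pos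
  simp only [Dz, eval_sub, eval_mul, eval_C, eval_X]
  field_simp

lemma hasDerivAt_evalScaled (p : Polynomial ℝ) (x : ℝ) :
    HasDerivAt (fun y => p.eval (Real.sqrt 2 * y))
      (Real.sqrt 2 * (derivative p).eval (Real.sqrt 2 * x)) x := by
  have h1 : HasDerivAt (fun y : ℝ => Real.sqrt 2 * y) (Real.sqrt 2) x := by
    simpa using (hasDerivAt_id x).const_mul (Real.sqrt 2)
  simpa [Function.comp_def, mul_comm] using (p.hasDerivAt (Real.sqrt 2 * x)).comp x h1

lemma hasDerivAt_gaussPart (x : ℝ) :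
    HasDerivAt (fun y : ℝ => Real.exp (-y ^ 2 / 2)) (-x * Real.exp (-x ^ 2 / 2)) x := by
  have h1 : HasDerivAt (fun y : ℝ => -y ^ 2 / 2) (-x) x := by
    have := ((hasDerivAt_pow 2 x).neg).div_const 2
    refine this.congr_deriv (Eq.symm ?_)
    push_cast
    ring
  have := (Real.hasDerivAt_exp (-x ^ 2 / 2)).comp x h1
  exact this.congr_deriv (mul_comm _ _)

lemma hasDerivAt_h (m : ℕ) (x : ℝ) : HasDerivAt (hermiteFunction m) (hderiv m x) x := by
  have hfun : hermiteFunction m =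
      fun y => κm m * ((Pm m).eval (Real.sqrt 2 * y) * Real.exp (-y ^ 2 / 2)) :=
    funext fun y => by rw [hermiteFunction_eq]; ring
  rw [hfun]
  have H := ((hasDerivAt_evalScaled (Pm m) x).mul (hasDerivAt_gaussPart x)).const_mul (κm m)
  refine H.congr_deriv (Eq.symm ?_)
  rw [hderiv, eval_Dz]
  ring

lemma eval_key (m : ℕ) (y : ℝ) :
    y * (derivative (Pm m)).eval y - (derivative (derivative (Pm m))).eval y
      = m * (Pm m).eval y := by
  have := congrArg (eval y) (X_mul_derivative_Pm m)
  simpa [eval_mul, eval_sub, eval_X, eval_C] using this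

lemma hasDerivAt_hderiv (m : ℕ) (x : ℝ) :
    HasDerivAt (hderiv m) ((x ^ 2 - (2 * m + 1)) * hermiteFunction m x) x := by
  have hfun : hderiv m =
      fun y => κm m * ((Dz (Pm m)).eval (Real.sqrt 2 * y) * Real.exp (-y ^ 2 / 2)) :=
    funext fun y => by rw [hderiv]; ring
  rw [hfun]
  have H := ((hasDerivAt_evalScaled (Dz (Pm m)) x).mul (hasDerivAt_gaussPart x)).const_mul (κm m)
  refine H.congr_deriv (Eq.symm ?_)
  have hs := sqrt2_mul_self
  have hsi : (Real.sqrt 2)⁻¹ * Real.sqrt 2 = 1 := inv_mul_cancel₀ (ne_of_gt sqrt2_pos)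
  have key := eval_key m (Real.sqrt 2 * x)
  rw [hermiteFunction_eq]
  simp only [Dz, derivative_sub, derivative_mul, derivative_C, derivative_X, zero_mul, one_mul,
    zero_add, eval_sub, eval_mul, eval_add, eval_C, eval_X, eval_Dz]
  linear_combination (2 * κm m * Real.exp (-x ^ 2 / 2)) * key
    + (-(κm m * Real.exp (-x ^ 2 / 2) * (derivative (derivative (Pm m))).eval (Real.sqrt 2 * x))) * hs
    + (κm m * Real.exp (-x ^ 2 / 2) * ((Pm m).eval (Real.sqrt 2 * x)
        - x ^ 2 * (Pm m).eval (Real.sqrt 2 * x)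
        + Real.sqrt 2 * x * (derivative (Pm m)).eval (Real.sqrt 2 * x))) * hsi

end Part2
section Part3

open Filter Topology

lemma integral_deriv_eq_zero {f f' : ℝ → ℝ} (hd : ∀ x, HasDerivAt f (f' x) x)
    (hint : Integrable f') (htop : Tendsto f atTop (𝓝 0)) (hbot : Tendsto f atBot (𝓝 0)) :
    ∫ x, f' x = 0 := by
  have hFTC : ∀ R : ℝ, ∫ x in (-R)..R, f' x = f R - f (-R) := fun R =>
    intervalIntegral.integral_eq_sub_of_hasDerivAt (fun x _ => hd x)
      hint.intervalIntegrable
  have h1 : Tendsto (fun R : ℝ => ∫ x in (-R)..R, f' x) atTop (𝓝 (∫ x, f' x)) :=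
    intervalIntegral_tendsto_integral hint tendsto_neg_atTop_atBot tendsto_id
  have h2 : Tendsto (fun R : ℝ => f R - f (-R)) atTop (𝓝 0) := by
    simpa using htop.sub (hbot.comp tendsto_neg_atTop_atBot)
  exact tendsto_nhds_unique (h1.congr fun R => hFTC R) h2

lemma expsq (x : ℝ) : Real.exp (-x ^ 2 / 2) * Real.exp (-x ^ 2 / 2) = Real.exp (-x ^ 2) := by
  rw [← Real.exp_add]
  norm_num

lemma my_exp_half (y : ℝ) : Real.exp (-y ^ 2 / 2) = Real.exp (-(2⁻¹ : ℝ) * y ^ 2) := by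
  congr 1
  ring

lemma integrable_scaled (r : Polynomial ℝ) :
    Integrable fun x : ℝ => r.eval (Real.sqrt 2 * x) * Real.exp (-x ^ 2) := by
  refine (integrable_poly_gauss (r.comp (C (Real.sqrt 2) * X)) one_pos).congr
    (Filter.Eventually.of_forall fun x => ?_)
  simp [eval_comp]

lemma tendsto_scaled_top (r : Polynomial ℝ) :
    Tendsto (fun x : ℝ => r.eval (Real.sqrt 2 * x) * Real.exp (-x ^ 2)) atTop (𝓝 0) := by
  refine (tendsto_poly_gauss_top (r.comp (C (Real.sqrt 2) * X)) one_pos).congr fun x => ?_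
  simp [eval_comp]

lemma tendsto_scaled_bot (r : Polynomial ℝ) :
    Tendsto (fun x : ℝ => r.eval (Real.sqrt 2 * x) * Real.exp (-x ^ 2)) atBot (𝓝 0) := by
  refine (tendsto_poly_gauss_bot (r.comp (C (Real.sqrt 2) * X)) one_pos).congr fun x => ?_
  simp [eval_comp]

lemma h_sq_eq (m : ℕ) : (fun x => hermiteFunction m x ^ 2)
    = fun x => (C ((κm m) ^ 2) * (Pm m) ^ 2).eval (Real.sqrt 2 * x) * Real.exp (-x ^ 2) := by
  funext x
  rw [hermiteFunction_eq, ← expsq x]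
  simp only [eval_mul, eval_C, eval_pow]
  ring

lemma hd_sq_eq (m : ℕ) : (fun x => hderiv m x ^ 2)
    = fun x => (C ((κm m) ^ 2) * (Dz (Pm m)) ^ 2).eval (Real.sqrt 2 * x) * Real.exp (-x ^ 2) := by
  funext x
  rw [hderiv, ← expsq x]
  simp only [eval_mul, eval_C, eval_pow]
  ring

lemma h_hd_eq (m : ℕ) : (fun x => hermiteFunction m x * hderiv m x)
    = fun x => (C ((κm m) ^ 2) * (Pm m * Dz (Pm m))).eval (Real.sqrt 2 * x)
        * Real.exp (-x ^ 2) := by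
  funext x
  rw [hermiteFunction_eq, hderiv, ← expsq x]
  simp only [eval_mul, eval_C, eval_pow]
  ring

lemma xsq_h_sq_eq (m : ℕ) : (fun x => x ^ 2 * hermiteFunction m x ^ 2)
    = fun x => (C ((κm m) ^ 2 * 2⁻¹) * (X ^ 2 * (Pm m) ^ 2)).eval (Real.sqrt 2 * x)
        * Real.exp (-x ^ 2) := by
  funext x
  rw [hermiteFunction_eq, ← expsq x]
  simp only [eval_mul, eval_C, eval_pow, eval_X]
  linear_combination (-(2⁻¹ * x ^ 2 * (κm m) ^ 2 * ((Pm m).eval (Real.sqrt 2 * x)) ^ 2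
    * Real.exp (-x ^ 2 / 2) * Real.exp (-x ^ 2 / 2))) * sqrt2_mul_self

lemma integrable_h_sq (m : ℕ) : Integrable fun x => hermiteFunction m x ^ 2 := by
  rw [h_sq_eq]; exact integrable_scaled _

lemma integrable_hd_sq (m : ℕ) : Integrable fun x => hderiv m x ^ 2 := by
  rw [hd_sq_eq]; exact integrable_scaled _

lemma integrable_xsq_h_sq (m : ℕ) : Integrable fun x => x ^ 2 * hermiteFunction m x ^ 2 := by
  rw [xsq_h_sq_eq]; exact integrable_scaled _

lemma tendsto_h_hd_top (m : ℕ) :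
    Tendsto (fun x => hermiteFunction m x * hderiv m x) atTop (𝓝 0) := by
  rw [h_hd_eq]; exact tendsto_scaled_top _

lemma tendsto_h_hd_bot (m : ℕ) :
    Tendsto (fun x => hermiteFunction m x * hderiv m x) atBot (𝓝 0) := by
  rw [h_hd_eq]; exact tendsto_scaled_bot _

lemma continuous_h (m : ℕ) : Continuous (hermiteFunction m) := by
  have hfun : hermiteFunction m =
      fun y => κm m * (Pm m).eval (Real.sqrt 2 * y) * Real.exp (-y ^ 2 / 2) :=
    funext fun y => hermiteFunction_eq m y
  rw [hfun]
  exact (continuous_const.mul ((Pm m).continuous.comp (continuous_const.mul continuous_id))).mul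
    (Real.continuous_exp.comp ((continuous_pow 2).neg.div_const 2))

lemma continuous_hderiv (m : ℕ) : Continuous (hderiv m) := by
  exact (continuous_const.mul ((Dz (Pm m)).continuous.comp
    (continuous_const.mul continuous_id))).mul
    (Real.continuous_exp.comp ((continuous_pow 2).neg.div_const 2))

/-- integration by parts step for Hermite polynomial normalization -/
lemma Km_succ (m : ℕ) :
    ∫ y : ℝ, ((Pm (m + 1)).eval y) ^ 2 * Real.exp (-y ^ 2 / 2)
      = ((m : ℝ) + 1) * ∫ y : ℝ, ((Pm m).eval y) ^ 2 * Real.exp (-y ^ 2 / 2) := by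
  set f : ℝ → ℝ := fun y => (Pm (m + 1)).eval y * ((Pm m).eval y * Real.exp (-y ^ 2 / 2))
  set f' : ℝ → ℝ := fun y =>
    ((m : ℝ) + 1) * (((Pm m).eval y) ^ 2 * Real.exp (-y ^ 2 / 2))
      - ((Pm (m + 1)).eval y) ^ 2 * Real.exp (-y ^ 2 / 2)
  have hIa : Integrable fun y : ℝ => ((Pm m).eval y) ^ 2 * Real.exp (-y ^ 2 / 2) := by
    refine (integrable_poly_gauss ((Pm m) ^ 2) (by norm_num : (0:ℝ) < 2⁻¹)).congr
      (Filter.Eventually.of_forall fun y => ?_)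
    simp only [eval_pow, my_exp_half]
  have hIb : Integrable fun y : ℝ => ((Pm (m + 1)).eval y) ^ 2 * Real.exp (-y ^ 2 / 2) := by
    refine (integrable_poly_gauss ((Pm (m + 1)) ^ 2) (by norm_num : (0:ℝ) < 2⁻¹)).congr
      (Filter.Eventually.of_forall fun y => ?_)
    simp only [eval_pow, my_exp_half]
  have hd : ∀ y : ℝ, HasDerivAt f (f' y) y := by
    intro y
    have H := ((Pm (m + 1)).hasDerivAt y).mul (((Pm m).hasDerivAt y).mul (hasDerivAt_gaussPart y))
    refine H.congr_deriv (Eq.symm ?_)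
    have e1 := congrArg (eval y) (derivative_Pm m)
    simp only [eval_mul, eval_C] at e1
    have e2 := congrArg (eval y) (Pm_succ m)
    simp only [eval_sub, eval_mul, eval_X] at e2
    simp only [f', Pi.mul_apply]
    linear_combination (-((Pm m).eval y * Real.exp (-y ^ 2 / 2))) * e1
      + (-((Pm (m+1)).eval y * Real.exp (-y ^ 2 / 2))) * e2
  have hint : Integrable f' := (hIa.const_mul _).sub hIb
  have htop : Tendsto f atTop (𝓝 0) := by
    have := tendsto_poly_gauss_top (Pm (m + 1) * Pm m) (by norm_num : (0:ℝ) < 2⁻¹)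
    refine this.congr fun y => ?_
    simp only [f', f, eval_mul, my_exp_half]
    ring
  have hbot : Tendsto f atBot (𝓝 0) := by
    have := tendsto_poly_gauss_bot (Pm (m + 1) * Pm m) (by norm_num : (0:ℝ) < 2⁻¹)
    refine this.congr fun y => ?_
    simp only [f', f, eval_mul, my_exp_half]
    ring
  have h0 : ∫ y, f' y = 0 := integral_deriv_eq_zero hd hint htop hbot
  rw [MeasureTheory.integral_sub (hIa.const_mul _) hIb, MeasureTheory.integral_const_mul] at h0
  linarith

lemma Km_eq (m : ℕ) :
    ∫ y : ℝ, ((Pm m).eval y) ^ 2 * Real.exp (-y ^ 2 / 2)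
      = (Nat.factorial m : ℝ) * Real.sqrt (2 * Real.pi) := by
  induction m with
  | zero =>
    have := integral_gaussian (2⁻¹ : ℝ)
    simp only [Pm_zero, eval_one, one_pow, one_mul]
    calc ∫ y : ℝ, Real.exp (-y ^ 2 / 2) = ∫ y : ℝ, Real.exp (-(2⁻¹:ℝ) * y ^ 2) := by
          congr 1; funext y; rw [my_exp_half]
      _ = Real.sqrt (Real.pi / 2⁻¹) := integral_gaussian _
      _ = (Nat.factorial 0 : ℝ) * Real.sqrt (2 * Real.pi) := by
          rw [show Real.pi / 2⁻¹ = 2 * Real.pi by ring]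
          norm_num
  | succ k ih =>
    rw [Km_succ, ih, Nat.factorial_succ]
    push_cast
    ring

lemma integral_h_sq (m : ℕ) : ∫ x : ℝ, hermiteFunction m x ^ 2 = 1 := by
  have hchg : (fun x : ℝ => (C ((κm m) ^ 2) * (Pm m) ^ 2).eval (Real.sqrt 2 * x)
      * Real.exp (-x ^ 2))
      = fun x : ℝ => (fun y => (C ((κm m) ^ 2) * (Pm m) ^ 2).eval y * Real.exp (-y ^ 2 / 2))
          (Real.sqrt 2 * x) := by
    funext x
    simp only
    congr 1
    rw [mul_pow]
    rw [show Real.sqrt 2 ^ 2 = 2 by rw [sq]; exact sqrt2_mul_self]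
    ring_nf
  rw [h_sq_eq, hchg, MeasureTheory.Measure.integral_comp_mul_left
    (fun y => (C ((κm m) ^ 2) * (Pm m) ^ 2).eval y * Real.exp (-y ^ 2 / 2)) (Real.sqrt 2)]
  have : (∫ y : ℝ, (C ((κm m) ^ 2) * (Pm m) ^ 2).eval y * Real.exp (-y ^ 2 / 2))
      = (κm m) ^ 2 * ((Nat.factorial m : ℝ) * Real.sqrt (2 * Real.pi)) := by
    rw [← Km_eq m, ← MeasureTheory.integral_const_mul]
    congr 1
    funext y
    simp only [eval_mul, eval_C, eval_pow]
    ring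
  rw [this]
  have hπ : (0:ℝ) < Real.sqrt Real.pi := Real.sqrt_pos.mpr Real.pi_pos
  have hfac : (0:ℝ) < (Nat.factorial m : ℝ) := by positivity
  have hA : (0:ℝ) < 2 ^ m * (Nat.factorial m : ℝ) * Real.sqrt Real.pi := by positivity
  have hκ : (κm m) ^ 2 = (2:ℝ) ^ m / (2 ^ m * (Nat.factorial m : ℝ) * Real.sqrt Real.pi) := by
    rw [κm, mul_pow]
    rw [show ((Real.sqrt (2 ^ m * (Nat.factorial m : ℝ) * Real.sqrt Real.pi))⁻¹) ^ 2
        = ((2:ℝ) ^ m * (Nat.factorial m : ℝ) * Real.sqrt Real.pi)⁻¹ by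
      rw [← Real.sqrt_inv, sq, Real.mul_self_sqrt (by positivity)]]
    rw [show ((Real.sqrt 2) ^ m) ^ 2 = ((Real.sqrt 2) ^ 2) ^ m by ring,
      Real.sq_sqrt (by norm_num : (0:ℝ) ≤ 2), inv_mul_eq_div]
  rw [hκ]
  rw [Real.sqrt_mul (by norm_num : (0:ℝ) ≤ 2) Real.pi]
  rw [abs_of_pos (by positivity : (0:ℝ) < (Real.sqrt 2)⁻¹)]
  have h2 : (0:ℝ) < Real.sqrt 2 := sqrt2_pos
  have hs := sqrt2_mul_self
  rw [smul_eq_mul]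
  field_simp

lemma integral_hd_sq_le (m : ℕ) :
    ∫ x : ℝ, hderiv m x ^ 2 ≤ 2 * (m : ℝ) + 1 := by
  set lam : ℝ := 2 * (m : ℝ) + 1
  have hIc : Integrable fun x => (x ^ 2 - lam) * hermiteFunction m x ^ 2 := by
    have := (integrable_xsq_h_sq m).sub ((integrable_h_sq m).const_mul lam)
    refine this.congr (Filter.Eventually.of_forall fun x => ?_)
    simp only [Pi.sub_apply]
    ring
  have hd : ∀ x : ℝ, HasDerivAt (fun x => hermiteFunction m x * hderiv m x)
      (hderiv m x ^ 2 + (x ^ 2 - lam) * hermiteFunction m x ^ 2) x := by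
    intro x
    have H := (hasDerivAt_h m x).mul (hasDerivAt_hderiv m x)
    refine H.congr_deriv (Eq.symm ?_)
    simp only [lam]
    ring
  have h0 : ∫ x, (hderiv m x ^ 2 + (x ^ 2 - lam) * hermiteFunction m x ^ 2) = 0 :=
    integral_deriv_eq_zero hd ((integrable_hd_sq m).add hIc) (tendsto_h_hd_top m)
      (tendsto_h_hd_bot m)
  rw [MeasureTheory.integral_add (integrable_hd_sq m) hIc] at h0
  have hmono : ∫ x, (lam - x ^ 2) * hermiteFunction m x ^ 2 ≤ ∫ x, lam * hermiteFunction m x ^ 2 := by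
    refine MeasureTheory.integral_mono ?_ ((integrable_h_sq m).const_mul lam) ?_
    · have := ((integrable_h_sq m).const_mul lam).sub (integrable_xsq_h_sq m)
      refine this.congr (Filter.Eventually.of_forall fun x => ?_)
      simp only [Pi.sub_apply]
      ring
    · intro x
      have h1 : x ^ 2 * hermiteFunction m x ^ 2 ≥ 0 := by positivity
      simp only
      nlinarith
  have heq : ∫ x, (lam - x ^ 2) * hermiteFunction m x ^ 2
      = - ∫ x, (x ^ 2 - lam) * hermiteFunction m x ^ 2 := by
    rw [← MeasureTheory.integral_neg]
    congr 1
    funext x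
    ring
  rw [MeasureTheory.integral_const_mul, integral_h_sq, mul_one] at hmono
  rw [heq] at hmono
  linarith

end Part3
section Part4

open Filter Topology Set

noncomputable def Em (m : ℕ) (x : ℝ) : ℝ :=
  hderiv m x ^ 2 + ((2 * m + 1 : ℝ) - x ^ 2) * hermiteFunction m x ^ 2

lemma hasDerivAt_Em (m : ℕ) (x : ℝ) :
    HasDerivAt (Em m) (-2 * x * hermiteFunction m x ^ 2) x := by
  have A := (hasDerivAt_hderiv m x).pow 2
  have B : HasDerivAt (fun x : ℝ => (2 * m + 1 : ℝ) - x ^ 2) (-(2 * x)) x := by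
    simpa using (hasDerivAt_pow 2 x).const_sub (2 * (m : ℝ) + 1)
  have C := (hasDerivAt_h m x).pow 2
  have H := A.add (B.mul C)
  refine H.congr_deriv (Eq.symm ?_)
  push_cast [Pi.pow_apply]
  ring

lemma continuous_Ederiv (m : ℕ) : Continuous fun t : ℝ => -2 * t * hermiteFunction m t ^ 2 :=
  (continuous_const.mul continuous_id).mul ((continuous_h m).pow 2)

lemma Em_FTC (m : ℕ) (x : ℝ) :
    Em m x - Em m 0 = ∫ t in (0:ℝ)..x, (-2 * t * hermiteFunction m t ^ 2) :=
  (intervalIntegral.integral_eq_sub_of_hasDerivAt (fun t _ => hasDerivAt_Em m t)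
    ((continuous_Ederiv m).intervalIntegrable 0 x)).symm

lemma interval_h_sq_le_one (m : ℕ) {u v : ℝ} (huv : u ≤ v) :
    ∫ t in u..v, hermiteFunction m t ^ 2 ≤ 1 := by
  rw [intervalIntegral.integral_of_le huv]
  calc ∫ t in Set.Ioc u v, hermiteFunction m t ^ 2
      ≤ ∫ t, hermiteFunction m t ^ 2 :=
        setIntegral_le_integral (integrable_h_sq m)
          (Filter.Eventually.of_forall fun t => sq_nonneg _)
    _ = 1 := integral_h_sq m

lemma Em_le_Em0 (m : ℕ) (x : ℝ) : Em m x ≤ Em m 0 := by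
  rcases le_total 0 x with hx | hx
  · have hpos : 0 ≤ ∫ t in (0:ℝ)..x, 2 * t * hermiteFunction m t ^ 2 := by
      apply intervalIntegral.integral_nonneg hx
      intro t ht
      have ht0 : 0 ≤ t := ht.1
      nlinarith [sq_nonneg (hermiteFunction m t)]
    have heq : (fun t : ℝ => -2 * t * hermiteFunction m t ^ 2)
        = fun t : ℝ => -(2 * t * hermiteFunction m t ^ 2) := funext fun t => by ring
    have hFTC := Em_FTC m x
    rw [heq, intervalIntegral.integral_neg] at hFTC
    linarith
  · have h1 : 0 ≤ ∫ t in x..(0:ℝ), (-2 * t * hermiteFunction m t ^ 2) := by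
      apply intervalIntegral.integral_nonneg hx
      intro t ht
      have ht0 : t ≤ 0 := ht.2
      nlinarith [sq_nonneg (hermiteFunction m t)]
    have h2 := Em_FTC m x
    rw [intervalIntegral.integral_symm x 0] at h2
    linarith

lemma Em0_le (m : ℕ) : Em m 0 ≤ 5 * Real.sqrt (2 * m + 1) := by
  set lam : ℝ := 2 * (m : ℝ) + 1 with hlam
  have hlampos : 0 < lam := by positivity
  set s : ℝ := Real.sqrt lam with hsdef
  have hs : 0 < s := Real.sqrt_pos.mpr hlampos
  have hss : s * s = lam := Real.mul_self_sqrt hlampos.le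
  set a : ℝ := s / 2 with hadef
  have ha : 0 < a := by positivity
  -- step 1
  have step1 : ∀ x ∈ Icc (0:ℝ) a, Em m 0 ≤ Em m x + s := by
    intro x hx
    have hx0 : 0 ≤ x := hx.1
    have hxa : x ≤ a := hx.2
    have hFTC := Em_FTC m x
    have hb : ∫ t in (0:ℝ)..x, (-2 * t * hermiteFunction m t ^ 2)
        ≥ ∫ t in (0:ℝ)..x, (-(s * hermiteFunction m t ^ 2)) := by
      apply intervalIntegral.integral_mono_on hx0
      · exact (((continuous_const.mul ((continuous_h m).pow 2))).neg).intervalIntegrable 0 x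
      · exact ((continuous_Ederiv m)).intervalIntegrable 0 x
      · intro t ht
        have ht0 : 0 ≤ t := ht.1
        have htx : t ≤ x := ht.2
        have : 2 * t ≤ s := by
          have : t ≤ a := le_trans htx hxa
          simp only [hadef] at this
          linarith
        nlinarith [sq_nonneg (hermiteFunction m t)]
    have hc : ∫ t in (0:ℝ)..x, (-(s * hermiteFunction m t ^ 2))
        = -(s * ∫ t in (0:ℝ)..x, hermiteFunction m t ^ 2) := by
      rw [intervalIntegral.integral_neg, intervalIntegral.integral_const_mul]
    have hd : ∫ t in (0:ℝ)..x, hermiteFunction m t ^ 2 ≤ 1 := interval_h_sq_le_one m hx0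
    have hmul : s * (∫ t in (0:ℝ)..x, hermiteFunction m t ^ 2) ≤ s * 1 :=
      mul_le_mul_of_nonneg_left hd hs.le
    linarith [hFTC, hb, hc, hmul]
  -- step 2 : integrate step1 over [0,a]
  have hcontEm : Continuous (Em m) := by
    refine ((continuous_hderiv m).pow 2).add (Continuous.mul ?_ ((continuous_h m).pow 2))
    exact continuous_const.sub (continuous_pow 2)
  have step2 : a * Em m 0 ≤ (∫ x in (0:ℝ)..a, Em m x) + a * s := by
    have h1 : ∫ _x in (0:ℝ)..a, Em m 0 ≤ ∫ x in (0:ℝ)..a, (Em m x + s) := by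
      apply intervalIntegral.integral_mono_on ha.le
      · exact intervalIntegrable_const
      · exact (hcontEm.add continuous_const).intervalIntegrable 0 a
      · exact step1
    rw [intervalIntegral.integral_const, intervalIntegral.integral_add
      (hcontEm.intervalIntegrable 0 a) intervalIntegrable_const,
      intervalIntegral.integral_const] at h1
    simp only [sub_zero, smul_eq_mul] at h1
    linarith
  -- step 3
  have hd_le : ∫ x in (0:ℝ)..a, hderiv m x ^ 2 ≤ lam := by
    calc ∫ x in (0:ℝ)..a, hderiv m x ^ 2
        ≤ ∫ x, hderiv m x ^ 2 := by
          rw [intervalIntegral.integral_of_le ha.le]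
          exact setIntegral_le_integral (integrable_hd_sq m)
            (Filter.Eventually.of_forall fun t => sq_nonneg _)
      _ ≤ lam := by simpa [hlam] using integral_hd_sq_le m
  have step3 : ∫ x in (0:ℝ)..a, Em m x ≤ 2 * lam := by
    have h1 : ∫ x in (0:ℝ)..a, Em m x
        ≤ ∫ x in (0:ℝ)..a, (hderiv m x ^ 2 + lam * hermiteFunction m x ^ 2) := by
      apply intervalIntegral.integral_mono_on ha.le
      · exact hcontEm.intervalIntegrable 0 a
      · exact (((continuous_hderiv m).pow 2).add
          (continuous_const.mul ((continuous_h m).pow 2))).intervalIntegrable 0 a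
      · intro t ht
        simp only [Em, hlam]
        nlinarith [sq_nonneg (t * hermiteFunction m t), sq_nonneg (hermiteFunction m t),
          sq_nonneg t]
    have h2 : ∫ x in (0:ℝ)..a, (hderiv m x ^ 2 + lam * hermiteFunction m x ^ 2)
        = (∫ x in (0:ℝ)..a, hderiv m x ^ 2) + lam * ∫ x in (0:ℝ)..a, hermiteFunction m x ^ 2 := by
      rw [intervalIntegral.integral_add (f := fun x => hderiv m x ^ 2)
        (g := fun x => lam * hermiteFunction m x ^ 2)
        (((continuous_hderiv m).pow 2).intervalIntegrable 0 a)
        ((continuous_const.mul ((continuous_h m).pow 2)).intervalIntegrable 0 a),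
        intervalIntegral.integral_const_mul]
    have h3 : lam * ∫ x in (0:ℝ)..a, hermiteFunction m x ^ 2 ≤ lam := by
      have := interval_h_sq_le_one m ha.le
      nlinarith
    linarith
  -- combine
  have final : a * Em m 0 ≤ 2 * lam + a * s := by linarith
  have : Em m 0 ≤ (2 * lam + a * s) / a := by
    rw [le_div_iff₀ ha]
    linarith
  calc Em m 0 ≤ (2 * lam + a * s) / a := this
    _ = 5 * s := by
      rw [hadef]
      field_simp
      nlinarith [hss]
  
lemma bulk_bound (m : ℕ) (x : ℝ) (hx : |x| ≤ Real.sqrt (2 * m + 1) / 2) :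
    hermiteFunction m x ^ 2 ≤ 7 / Real.sqrt (2 * m + 1) := by
  set lam : ℝ := 2 * (m : ℝ) + 1 with hlam
  have hlampos : 0 < lam := by positivity
  set s : ℝ := Real.sqrt lam with hsdef
  have hs : 0 < s := Real.sqrt_pos.mpr hlampos
  have hss : s * s = lam := Real.mul_self_sqrt hlampos.le
  have hx2 : x ^ 2 ≤ lam / 4 := by
    have h1 : x ^ 2 ≤ (s / 2) ^ 2 := by
      rw [← sq_abs x]
      exact pow_le_pow_left₀ (abs_nonneg x) hx 2
    nlinarith
  have k1 : (lam - x ^ 2) * hermiteFunction m x ^ 2 ≤ 5 * s := by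
    have h1 : (lam - x ^ 2) * hermiteFunction m x ^ 2 ≤ Em m x := by
      simp only [Em, hlam]
      nlinarith [sq_nonneg (hderiv m x)]
    have h2 := Em_le_Em0 m x
    have h3 := Em0_le m
    simp only [← hlam, ← hsdef] at h3
    linarith
  have k4 : (3 / 4) * (hermiteFunction m x ^ 2 * s) * s ≤ 5 * s := by
    nlinarith [sq_nonneg (hermiteFunction m x)]
  have k5 : (3 / 4) * (hermiteFunction m x ^ 2 * s) ≤ 5 := le_of_mul_le_mul_right k4 hs
  rw [le_div_iff₀ hs]
  linarith

end Part4
section Part5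

open Filter Topology Set

noncomputable def G1 (k : ℕ) (x : ℝ) : ℝ := 2 * hermiteFunction k x * hderiv k x

lemma hasDerivAt_h_sq (k : ℕ) (x : ℝ) :
    HasDerivAt (fun y => hermiteFunction k y ^ 2) (G1 k x) x := by
  have := (hasDerivAt_h k x).pow 2
  refine this.congr_deriv (Eq.symm ?_)
  simp only [G1]
  ring

lemma hasDerivAt_G1 (k : ℕ) (x : ℝ) :
    HasDerivAt (G1 k)
      (2 * hderiv k x ^ 2 + 2 * (x ^ 2 - (2 * k + 1 : ℝ)) * hermiteFunction k x ^ 2) x := by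
  have := ((hasDerivAt_h k x).mul (hasDerivAt_hderiv k x)).const_mul (2 : ℝ)
  have h2 : G1 k = fun x => 2 * (hermiteFunction k x * hderiv k x) := by
    funext y; simp only [G1]; ring
  rw [h2]
  refine this.congr_deriv (Eq.symm ?_)
  push_cast
  ring

lemma continuous_G1 (k : ℕ) : Continuous (G1 k) :=
  (continuous_const.mul (continuous_h k)).mul (continuous_hderiv k)

lemma tendsto_G1_top (k : ℕ) : Tendsto (G1 k) atTop (𝓝 0) := by
  have h := (tendsto_h_hd_top k).const_mul (2 : ℝ)
  rw [mul_zero] at h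
  refine h.congr fun x => ?_
  simp only [G1]
  ring

lemma G1_nonpos (k : ℕ) {y : ℝ} (hy : Real.sqrt (2 * k + 1) ≤ y) : G1 k y ≤ 0 := by
  set lam : ℝ := 2 * (k : ℝ) + 1 with hlam
  have hlampos : 0 < lam := by positivity
  have hss : Real.sqrt lam * Real.sqrt lam = lam := Real.mul_self_sqrt hlampos.le
  have hmono : ∀ z, y ≤ z → G1 k y ≤ G1 k z := by
    intro z hz
    have hFTC : G1 k z - G1 k y = ∫ t in y..z,
        (2 * hderiv k t ^ 2 + 2 * (t ^ 2 - lam) * hermiteFunction k t ^ 2) := by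
      refine (intervalIntegral.integral_eq_sub_of_hasDerivAt (fun t _ => hasDerivAt_G1 k t) ?_).symm
      refine Continuous.intervalIntegrable ?_ y z
      refine (continuous_const.mul ((continuous_hderiv k).pow 2)).add ?_
      exact (continuous_const.mul ((continuous_pow 2).sub continuous_const)).mul
        ((continuous_h k).pow 2)
    have hnn : 0 ≤ ∫ t in y..z,
        (2 * hderiv k t ^ 2 + 2 * (t ^ 2 - lam) * hermiteFunction k t ^ 2) := by
      apply intervalIntegral.integral_nonneg hz
      intro t ht
      have ht1 : Real.sqrt lam ≤ t := le_trans hy ht.1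
      have ht2 : lam ≤ t ^ 2 := by nlinarith [Real.sqrt_nonneg lam]
      nlinarith [sq_nonneg (hermiteFunction k t), sq_nonneg (hderiv k t)]
    linarith
  have hev : ∀ᶠ z in atTop, G1 k y ≤ G1 k z := by
    filter_upwards [eventually_ge_atTop y] with z hz using hmono z hz
  exact ge_of_tendsto (tendsto_G1_top k) hev

lemma h_sq_anti (k : ℕ) {u v : ℝ} (hu : Real.sqrt (2 * k + 1) ≤ u) (huv : u ≤ v) :
    hermiteFunction k v ^ 2 ≤ hermiteFunction k u ^ 2 := by
  have hFTC : hermiteFunction k v ^ 2 - hermiteFunction k u ^ 2 = ∫ t in u..v, G1 k t :=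
    (intervalIntegral.integral_eq_sub_of_hasDerivAt (fun t _ => hasDerivAt_h_sq k t)
      ((continuous_G1 k).intervalIntegrable u v)).symm
  have hnp : ∫ t in u..v, G1 k t ≤ ∫ t in u..v, (0:ℝ) := by
    apply intervalIntegral.integral_mono_on huv ((continuous_G1 k).intervalIntegrable u v)
      intervalIntegrable_const
    intro t ht
    exact G1_nonpos k (le_trans hu ht.1)
  simp only [intervalIntegral.integral_zero] at hnp
  linarith

lemma tail_bound_pos (k : ℕ) {y : ℝ} (hy : 2 * Real.sqrt (2 * (k : ℝ) + 1) ≤ y) :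
    hermiteFunction k y ^ 2 ≤ 2 / y := by
  set lam : ℝ := 2 * (k : ℝ) + 1 with hlam
  have hs0 : 0 < Real.sqrt lam := Real.sqrt_pos.mpr (by positivity)
  have hy0 : 0 < y := lt_of_lt_of_le (by linarith) hy
  have hmid : Real.sqrt lam ≤ y / 2 := by
    simp only [hlam] at *
    linarith
  have hpt : ∀ t ∈ Icc (y / 2) y, hermiteFunction k y ^ 2 ≤ hermiteFunction k t ^ 2 := by
    intro t ht
    exact h_sq_anti k (le_trans hmid ht.1) ht.2
  have hint : ∫ _t in (y / 2)..y, hermiteFunction k y ^ 2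
      ≤ ∫ t in (y / 2)..y, hermiteFunction k t ^ 2 := by
    apply intervalIntegral.integral_mono_on (by linarith) intervalIntegrable_const
      (((continuous_h k).pow 2).intervalIntegrable _ _) hpt
  rw [intervalIntegral.integral_const, smul_eq_mul] at hint
  have h1 : ∫ t in (y / 2)..y, hermiteFunction k t ^ 2 ≤ 1 :=
    interval_h_sq_le_one k (by linarith)
  rw [le_div_iff₀ hy0]
  nlinarith

lemma h_neg (k : ℕ) (x : ℝ) :
    hermiteFunction k (-x) = (-1 : ℝ) ^ k * hermiteFunction k x := by
  rw [hermiteFunction_eq, hermiteFunction_eq]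
  have hc := congrArg (Polynomial.eval (Real.sqrt 2 * x)) (Pm_comp_neg k)
  simp only [eval_comp, eval_mul, eval_pow, eval_neg, eval_X, eval_one] at hc
  rw [show Real.sqrt 2 * (-x) = -(Real.sqrt 2 * x) by ring, hc,
    show (-x) ^ 2 = x ^ 2 by ring]
  ring

lemma tail_bound_abs (k : ℕ) {y : ℝ} (hy : 2 * Real.sqrt (2 * (k : ℝ) + 1) ≤ |y|) :
    hermiteFunction k y ^ 2 ≤ 2 / |y| := by
  rcases le_or_gt 0 y with h0 | h0
  · rw [abs_of_nonneg h0] at *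
    exact tail_bound_pos k hy
  · rw [abs_of_neg h0] at *
    have hsq : hermiteFunction k y ^ 2 = hermiteFunction k (-y) ^ 2 := by
      conv_lhs => rw [show y = -(-y) by ring]
      rw [h_neg, mul_pow, show ((-1 : ℝ) ^ k) ^ 2 = 1 by
        rw [← pow_mul, mul_comm, pow_mul]; norm_num, one_mul]
    rw [hsq]
    exact tail_bound_pos k hy

end Part5
section Main

open Filter Topology Set

/-- Bilinear estimate: if `√(2n+1) ≤ (α/4)√(2m+1)` then
`∫ h_m(x)² h_n(αx)² dx ≤ C / (α √(2m+1))` for a universal constant `C`. -/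
theorem hermite_bilinear_rescaled :
    ∃ C > 0, ∀ (α : ℝ), 0 < α → ∀ (m n : ℕ),
      Real.sqrt (2 * (n : ℝ) + 1) ≤ (α / 4) * Real.sqrt (2 * (m : ℝ) + 1) →
      (∫ x : ℝ, (hermiteFunction m x) ^ 2 * (hermiteFunction n (α * x)) ^ 2)
        ≤ C / (α * Real.sqrt (2 * (m : ℝ) + 1)) := by
  refine ⟨12, by norm_num, fun α hα m n hyp => ?_⟩
  set sm : ℝ := Real.sqrt (2 * (m : ℝ) + 1) with hsmdef
  have hsm : 0 < sm := Real.sqrt_pos.mpr (by positivity)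
  have hαsm : 0 < α * sm := mul_pos hα hsm
  -- pointwise bound
  have key : ∀ x : ℝ, hermiteFunction m x ^ 2 * hermiteFunction n (α * x) ^ 2
      ≤ (7 / sm) * hermiteFunction n (α * x) ^ 2 + (4 / (α * sm)) * hermiteFunction m x ^ 2 := by
    intro x
    rcases le_or_gt |x| (sm / 2) with hx | hx
    · have hb := bulk_bound m x hx
      have h1 : hermiteFunction m x ^ 2 * hermiteFunction n (α * x) ^ 2
          ≤ (7 / sm) * hermiteFunction n (α * x) ^ 2 :=
        mul_le_mul_of_nonneg_right hb (sq_nonneg _)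
      have h2 : 0 ≤ (4 / (α * sm)) * hermiteFunction m x ^ 2 := by positivity
      linarith
    · have habs : |α * x| = α * |x| := by
        rw [abs_mul, abs_of_pos hα]
      have hge : 2 * Real.sqrt (2 * (n : ℝ) + 1) ≤ |α * x| := by
        rw [habs]
        have h1 : 2 * Real.sqrt (2 * (n : ℝ) + 1) ≤ (α / 2) * sm := by linarith
        have h2 : (α / 2) * sm ≤ α * |x| := by nlinarith
        linarith
      have ht := tail_bound_abs n hge
      have hd : 2 / |α * x| ≤ 4 / (α * sm) := by
        rw [habs]
        have hxpos : 0 < |x| := lt_trans (by positivity) hx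
        rw [div_le_div_iff₀ (mul_pos hα hxpos) hαsm]
        nlinarith
      have h1 : hermiteFunction m x ^ 2 * hermiteFunction n (α * x) ^ 2
          ≤ hermiteFunction m x ^ 2 * (4 / (α * sm)) :=
        mul_le_mul_of_nonneg_left (le_trans ht hd) (sq_nonneg _)
      have h2 : 0 ≤ (7 / sm) * hermiteFunction n (α * x) ^ 2 := by positivity
      linarith
  -- integrability
  have hn_int : Integrable fun x : ℝ => hermiteFunction n (α * x) ^ 2 := by
    have := (integrable_h_sq n).comp_mul_left' (R := α) (ne_of_gt hα)
    exact this
  have hRHS_int : Integrable fun x : ℝ =>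
      (7 / sm) * hermiteFunction n (α * x) ^ 2 + (4 / (α * sm)) * hermiteFunction m x ^ 2 :=
    (hn_int.const_mul _).add ((integrable_h_sq m).const_mul _)
  have hLHS_cont : Continuous fun x : ℝ =>
      hermiteFunction m x ^ 2 * hermiteFunction n (α * x) ^ 2 :=
    ((continuous_h m).pow 2).mul
      (((continuous_h n).comp (continuous_const.mul continuous_id)).pow 2)
  have hLHS_int : Integrable fun x : ℝ =>
      hermiteFunction m x ^ 2 * hermiteFunction n (α * x) ^ 2 := by
    refine hRHS_int.mono' hLHS_cont.aestronglyMeasurable ?_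
    refine Filter.Eventually.of_forall fun x => ?_
    rw [Real.norm_eq_abs, abs_of_nonneg (by positivity)]
    exact key x
  have hmono := MeasureTheory.integral_mono hLHS_int hRHS_int key
  -- compute RHS integral
  have hval : ∫ x : ℝ, hermiteFunction n (α * x) ^ 2 = α⁻¹ := by
    have := MeasureTheory.Measure.integral_comp_mul_left
      (fun y => hermiteFunction n y ^ 2) α
    rw [integral_h_sq, abs_of_pos (inv_pos.mpr hα), smul_eq_mul, mul_one] at this
    exact this
  have hsplit : ∫ x : ℝ, ((7 / sm) * hermiteFunction n (α * x) ^ 2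
      + (4 / (α * sm)) * hermiteFunction m x ^ 2)
      = (7 / sm) * α⁻¹ + (4 / (α * sm)) * 1 := by
    rw [MeasureTheory.integral_add (hn_int.const_mul _) ((integrable_h_sq m).const_mul _),
      MeasureTheory.integral_const_mul, MeasureTheory.integral_const_mul, hval, integral_h_sq]
  have harith : (7 / sm) * α⁻¹ + (4 / (α * sm)) * 1 ≤ 12 / (α * sm) := by
    rw [mul_one]
    have : (7 / sm) * α⁻¹ = 7 / (α * sm) := by
      field_simp
    rw [this]
    rw [← add_div, div_le_div_iff₀ hαsm hαsm]
    nlinarith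
  calc (∫ x : ℝ, hermiteFunction m x ^ 2 * hermiteFunction n (α * x) ^ 2)
      ≤ ∫ x : ℝ, ((7 / sm) * hermiteFunction n (α * x) ^ 2
          + (4 / (α * sm)) * hermiteFunction m x ^ 2) := hmono
    _ = (7 / sm) * α⁻¹ + (4 / (α * sm)) * 1 := hsplit
    _ ≤ 12 / (α * sm) := harith

end Main
end

section
/- Let X_n = g_n + i h_n be complex Gaussians with {g_n, h_n} iid standard real Gaussians. If indices n₁, n₁', n₁'', n₂, n₂', n₂'' ∈ I satisfy E[X_{n₁} X_{n₁'} \overline{X_{n₁''}} \overline{X_{n₂}} \overline{X_{n₂'}} X_{n₂''}] ≠ 0, then either (up to swapping n₁ with n₁' and n₂ with n₂') one has n₁ = n₂, n₁' = n₂', n₁'' = n₂'', or n₁ = n₁'', n₁' = n₂', n₂ = n₂''. -/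
open Real MeasureTheory ProbabilityTheory

/-- One of the two index-pairing configurations, for indices
`(a, b, c, d, e, f) = (n₁, n₁', n₁'', n₂, n₂', n₂'')`:
either `n₁ = n₂, n₁' = n₂', n₁'' = n₂''`, or `n₁ = n₁'', n₁' = n₂', n₂ = n₂''`. -/
def gaussianSexticPairing {I : Type*} (a b c d e f : I) : Prop :=
  (a = d ∧ b = e ∧ c = f) ∨ (a = c ∧ b = e ∧ d = f)

section Aux

lemma gauss_map_neg : (gaussianReal 0 1).map (fun x : ℝ => -x) = gaussianReal 0 1 := by
  have : (fun x : ℝ => -x) = ((-1 : ℝ) * ·) := by funext x; ring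
  rw [this, gaussianReal_map_const_mul]
  norm_num

lemma measurable_T {ι : Type*} [DecidableEq ι] (a b : ι) :
    Measurable (fun (x : ι → ℝ) i => if i = a then -(x b) else if i = b then x a else x i) := by
  refine measurable_pi_lambda _ fun i => ?_
  by_cases hia : i = a
  · simp only [if_pos hia]
    exact (measurable_pi_apply b).neg
  · by_cases hib : i = b
    · simp only [if_neg hia, if_pos hib]
      exact measurable_pi_apply a
    · simp only [if_neg hia, if_neg hib]
      exact measurable_pi_apply i

lemma iIndepFun_comp_inj {Ω ι κ β : Type*} [MeasurableSpace Ω] [MeasurableSpace β]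
    {μ : Measure Ω} {f : ι → Ω → β}
    (h : iIndepFun f μ) (e : κ → ι) (he : Function.Injective e) :
    iIndepFun (fun p => f (e p)) μ := by
  classical
  rw [iIndepFun_iff_measure_inter_preimage_eq_mul] at h ⊢
  intro S sets H
  set sets' : ι → Set β := fun q =>
    if hq : ∃ p ∈ S, e p = q then sets hq.choose else Set.univ with hsets'
  have hkey : ∀ p ∈ S, sets' (e p) = sets p := by
    intro p hp
    have hq : ∃ p' ∈ S, e p' = e p := ⟨p, hp, rfl⟩
    have := hq.choose_spec
    have hpe : hq.choose = p := he this.2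
    simp only [hsets', dif_pos hq, hpe]
  have h1 := h (S.image e) (sets := sets') ?_
  · have hinter : (⋂ q ∈ S.image e, f q ⁻¹' sets' q) = ⋂ p ∈ S, f (e p) ⁻¹' sets p := by
      rw [Finset.set_biInter_finset_image]
      exact Set.iInter₂_congr fun p hp => by rw [hkey p hp]
    have hprod : (∏ q ∈ S.image e, μ (f q ⁻¹' sets' q)) = ∏ p ∈ S, μ (f (e p) ⁻¹' sets p) := by
      rw [Finset.prod_image (fun a _ b _ hab => he hab)]
      exact Finset.prod_congr rfl fun p hp => by rw [hkey p hp]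
    rw [hinter, hprod] at h1
    exact h1
  · intro q hq
    rcases Finset.mem_image.1 hq with ⟨p, hp, rfl⟩
    rw [hkey p hp]
    exact H p hp

lemma map_eval_pi {ι Ω : Type*} [Fintype ι] [MeasurableSpace Ω]
    (P : Measure Ω) [IsProbabilityMeasure P]
    (Z : ι → Ω → ℝ) (hm : ∀ i, Measurable (Z i))
    (hi : iIndepFun Z P)
    (hg : ∀ i, P.map (Z i) = gaussianReal 0 1) :
    P.map (fun ω i => Z i ω) = Measure.pi (fun _ => gaussianReal 0 1) := by
  refine (Measure.pi_eq (μ' := P.map fun ω i => Z i ω)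
    (μ := fun _ : ι => gaussianReal 0 1) fun s hs => ?_).symm
  rw [Measure.map_apply (measurable_pi_lambda _ hm) (MeasurableSet.univ_pi hs)]
  have hpre : (fun ω i => Z i ω) ⁻¹' Set.univ.pi s = ⋂ i, Z i ⁻¹' s i := by
    ext ω; simp [Set.mem_pi]
  rw [hpre, hi.meas_iInter fun i => ⟨s i, hs i, rfl⟩]
  exact Finset.prod_congr rfl fun i _ => by
    rw [← hg i, Measure.map_apply (hm i) (hs i)]

lemma pi_gauss_invariant {ι : Type*} [Fintype ι] [DecidableEq ι] (a b : ι) (hab : a ≠ b) :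
    (Measure.pi (fun _ : ι => gaussianReal 0 1)).map
      (fun x i => if i = a then -(x b) else if i = b then x a else x i)
    = Measure.pi (fun _ : ι => gaussianReal 0 1) := by
  set T : (ι → ℝ) → (ι → ℝ) :=
    fun x i => if i = a then -(x b) else if i = b then x a else x i with hT
  have hTm : Measurable T := measurable_T a b
  refine (Measure.pi_eq (μ' := (Measure.pi fun _ : ι => gaussianReal 0 1).map T)
    (μ := fun _ : ι => gaussianReal 0 1) fun s hs => ?_).symm
  rw [Measure.map_apply hTm (MeasurableSet.univ_pi hs)]
  set s' : ι → Set ℝ := fun i =>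
    if i = a then s b else if i = b then (fun t : ℝ => -t) ⁻¹' (s a) else s i with hs'
  have hpre : T ⁻¹' Set.univ.pi s = Set.univ.pi s' := by
    ext x
    simp only [Set.mem_preimage, Set.mem_pi, Set.mem_univ, true_implies]
    constructor
    · intro hx i
      by_cases hia : i = a
      · subst hia
        have := hx b
        simpa [hT, hs', hab, Ne.symm hab] using this
      · by_cases hib : i = b
        · subst hib
          have := hx a
          simpa [hT, hs', hia, hab] using this
        · have := hx i
          simpa [hT, hs', hia, hib] using this
    · intro hx i
      by_cases hia : i = a
      · subst hia
        have := hx b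
        simpa [hT, hs', hab, Ne.symm hab] using this
      · by_cases hib : i = b
        · subst hib
          have := hx a
          simpa [hT, hs', hia, hab] using this
        · have := hx i
          simpa [hT, hs', hia, hib] using this
  rw [hpre, Measure.pi_pi]
  have hpoint : ∀ i, (gaussianReal 0 1) (s' (Equiv.swap a b i)) = (gaussianReal 0 1) (s i) := by
    intro i
    by_cases hia : i = a
    · rw [hia, Equiv.swap_apply_left]
      have h1 : s' b = (fun t : ℝ => -t) ⁻¹' (s a) := by simp [hs', Ne.symm hab]
      rw [h1, ← Measure.map_apply measurable_neg (hs a), gauss_map_neg]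
    · by_cases hib : i = b
      · rw [hib, Equiv.swap_apply_right]
        simp [hs']
      · rw [Equiv.swap_apply_of_ne_of_ne hia hib]
        simp [hs', hia, hib]
  calc ∏ i, (gaussianReal 0 1) (s' i)
      = ∏ i, (gaussianReal 0 1) (s' (Equiv.swap a b i)) :=
        (Equiv.prod_comp (Equiv.swap a b) fun i => (gaussianReal 0 1) (s' i)).symm
    _ = ∏ i, (gaussianReal 0 1) (s i) := Finset.prod_congr rfl fun i _ => hpoint i

lemma I_pow_ne_one {a b : ℕ} (ha : a ≤ 3) (hb : b ≤ 3) (hab : a ≠ b) :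
    Complex.I ^ a * (-Complex.I) ^ b ≠ 1 := by
  interval_cases a <;> interval_cases b <;>
    simp_all [pow_succ, Complex.ext_iff] <;> norm_num

lemma pair_step {I : Type*} {p q y z : I} (h2 : ({p, q} : Multiset I) = {y, z}) :
    (p = y ∧ q = z) ∨ (p = z ∧ q = y) := by
  have h3 : p ∈ ({y, z} : Multiset I) := by rw [← h2]; simp
  simp only [Multiset.insert_eq_cons, Multiset.mem_cons, Multiset.mem_singleton] at h3
  rcases h3 with h3 | h3
  · subst h3
    exact Or.inl ⟨rfl, by simpa using (Multiset.cons_inj_right p).1 h2⟩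
  · subst h3
    have h2' := h2.trans (Multiset.cons_swap y p 0)
    exact Or.inr ⟨rfl, by simpa using (Multiset.cons_inj_right p).1 h2'⟩

end Aux

lemma multiset_pairing {I : Type*} (n₁ n₁' n₁'' n₂ n₂' n₂'' : I)
    (h : ({n₁, n₁', n₂''} : Multiset I) = {n₁'', n₂, n₂'}) :
    gaussianSexticPairing n₁ n₁' n₁'' n₂ n₂' n₂'' ∨
    gaussianSexticPairing n₁' n₁ n₁'' n₂ n₂' n₂'' ∨
    gaussianSexticPairing n₁ n₁' n₁'' n₂' n₂ n₂'' ∨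
    gaussianSexticPairing n₁' n₁ n₁'' n₂' n₂ n₂'' := by
  classical
  have h1 : n₁ ∈ ({n₁'', n₂, n₂'} : Multiset I) := by
    rw [← h]; simp
  simp only [Multiset.insert_eq_cons, Multiset.mem_cons, Multiset.mem_singleton] at h1
  rcases h1 with h1 | h1 | h1
  · rw [h1] at h
    have h2 : ({n₁', n₂''} : Multiset I) = {n₂, n₂'} :=
      (Multiset.cons_inj_right n₁'').1 h
    rcases pair_step h2 with ⟨e1, e2⟩ | ⟨e1, e2⟩
    · exact Or.inr (Or.inr (Or.inl (Or.inr ⟨h1, e1, e2.symm⟩)))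
    · exact Or.inl (Or.inr ⟨h1, e1, e2.symm⟩)
  · rw [h1] at h
    have h' := h.trans (Multiset.cons_swap n₁'' n₂ {n₂'})
    have h2 : ({n₁', n₂''} : Multiset I) = {n₁'', n₂'} :=
      (Multiset.cons_inj_right n₂).1 h'
    rcases pair_step h2 with ⟨e1, e2⟩ | ⟨e1, e2⟩
    · exact Or.inr (Or.inr (Or.inr (Or.inr ⟨e1, h1, e2.symm⟩)))
    · exact Or.inl (Or.inl ⟨h1, e1, e2.symm⟩)
  · rw [h1] at h
    have h'' : ({n₁'', n₂, n₂'} : Multiset I) = n₂' ::ₘ {n₁'', n₂} := by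
      have s1 := Multiset.cons_swap n₂ n₂' ({} : Multiset I)
      have s2 := congrArg (n₁'' ::ₘ ·) s1
      exact s2.trans (Multiset.cons_swap n₁'' n₂' {n₂})
    have h2 : ({n₁', n₂''} : Multiset I) = {n₁'', n₂} :=
      (Multiset.cons_inj_right n₂').1 (h.trans h'')
    rcases pair_step h2 with ⟨e1, e2⟩ | ⟨e1, e2⟩
    · exact Or.inr (Or.inl (Or.inr ⟨e1, h1, e2.symm⟩))
    · exact Or.inr (Or.inr (Or.inl (Or.inl ⟨h1, e1, e2.symm⟩)))

/-- Sixth-moment index pairing for complex Gaussians: if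
`E[X_{n₁} X_{n₁'} conj(X_{n₁''}) conj(X_{n₂}) conj(X_{n₂'}) X_{n₂''}] ≠ 0`, then,
up to swapping `n₁` with `n₁'` and `n₂` with `n₂'`, either
`n₁ = n₂, n₁' = n₂', n₁'' = n₂''`, or `n₁ = n₁'', n₁' = n₂', n₂ = n₂''`. -/
theorem complex_gaussian_sextic_pairing
    {Ω : Type*} [MeasurableSpace Ω] (P : Measure Ω) [IsProbabilityMeasure P]
    {I : Type*} [Countable I]
    (Y : I × Bool → Ω → ℝ) (hmeas : ∀ p, Measurable (Y p))
    (hindep : iIndepFun Y P)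
    (hgauss : ∀ p, P.map (Y p) = gaussianReal 0 1)
    (X : I → Ω → ℂ)
    (hX : ∀ n ω, X n ω = (Y (n, false) ω : ℂ) + (Y (n, true) ω : ℂ) * Complex.I)
    (n₁ n₁' n₁'' n₂ n₂' n₂'' : I)
    (h : (∫ ω, X n₁ ω * X n₁' ω * (starRingEnd ℂ) (X n₁'' ω) *
        (starRingEnd ℂ) (X n₂ ω) * (starRingEnd ℂ) (X n₂' ω) * X n₂'' ω ∂P) ≠ 0) :
    gaussianSexticPairing n₁ n₁' n₁'' n₂ n₂' n₂'' ∨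
    gaussianSexticPairing n₁' n₁ n₁'' n₂ n₂' n₂'' ∨
    gaussianSexticPairing n₁ n₁' n₁'' n₂' n₂ n₂'' ∨
    gaussianSexticPairing n₁' n₁ n₁'' n₂' n₂ n₂'' := by
  classical
  by_cases hms : ({n₁, n₁', n₂''} : Multiset I) = ({n₁'', n₂, n₂'} : Multiset I)
  · exact multiset_pairing _ _ _ _ _ _ hms
  exfalso
  apply h
  -- pick a value with unequal counts
  obtain ⟨v, hv⟩ : ∃ v, Multiset.count v ({n₁, n₁', n₂''} : Multiset I) ≠
      Multiset.count v ({n₁'', n₂, n₂'} : Multiset I) := by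
    by_contra hc
    push_neg at hc
    exact hms (Multiset.ext.2 hc)
  set a := Multiset.count v ({n₁, n₁', n₂''} : Multiset I) with hadef
  set b := Multiset.count v ({n₁'', n₂, n₂'} : Multiset I) with hbdef
  have ha3 : a ≤ 3 := by
    have := Multiset.count_le_card v ({n₁, n₁', n₂''} : Multiset I)
    rw [hadef]; simpa using this
  have hb3 : b ≤ 3 := by
    have := Multiset.count_le_card v ({n₁'', n₂, n₂'} : Multiset I)
    rw [hbdef]; simpa using this
  set V : Finset I := {n₁, n₁', n₁'', n₂, n₂', n₂''} with hV
  have hn1 : n₁ ∈ V := by simp [hV]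
  have hn1' : n₁' ∈ V := by simp [hV]
  have hn1'' : n₁'' ∈ V := by simp [hV]
  have hn2 : n₂ ∈ V := by simp [hV]
  have hn2' : n₂' ∈ V := by simp [hV]
  have hn2'' : n₂'' ∈ V := by simp [hV]
  have hvV : v ∈ V := by
    rcases Nat.eq_zero_or_pos a with h0 | hpos
    · have hb0 : 0 < b := by omega
      have : v ∈ ({n₁'', n₂, n₂'} : Multiset I) := Multiset.count_pos.1 hb0
      simp only [Multiset.insert_eq_cons, Multiset.mem_cons, Multiset.mem_singleton] at this
      rcases this with rfl | rfl | rfl <;> assumption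
    · have : v ∈ ({n₁, n₁', n₂''} : Multiset I) := Multiset.count_pos.1 hpos
      simp only [Multiset.insert_eq_cons, Multiset.mem_cons, Multiset.mem_singleton] at this
      rcases this with rfl | rfl | rfl <;> assumption
  -- the reindexed family
  set κ := ({x // x ∈ V} × Bool)
  set Z : κ → Ω → ℝ := fun p => Y ((p.1 : I), p.2) with hZ
  have he : Function.Injective (fun p : κ => ((p.1 : I), p.2)) := by
    rintro ⟨⟨p1, hp1⟩, p2⟩ ⟨⟨q1, hq1⟩, q2⟩ hpq
    simp only [Prod.mk.injEq] at hpq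
    simp [Prod.ext_iff, Subtype.ext_iff, hpq.1, hpq.2]
  have hZindep : iIndepFun Z P :=
    iIndepFun_comp_inj hindep _ he
  have hZm : ∀ p, Measurable (Z p) := fun p => hmeas _
  have hZg : ∀ p, P.map (Z p) = gaussianReal 0 1 := fun p => hgauss _
  have hφ : P.map (fun ω (p : κ) => Z p ω) = Measure.pi (fun _ => gaussianReal 0 1) :=
    map_eval_pi P Z hZm hZindep hZg
  set μ : Measure (κ → ℝ) := Measure.pi (fun _ => gaussianReal 0 1) with hμ
  -- the complex coordinates on the product space
  set Xh : I → (κ → ℝ) → ℂ := fun n x =>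
    if hn : n ∈ V then (x (⟨n, hn⟩, false) : ℂ) + (x (⟨n, hn⟩, true) : ℂ) * Complex.I
    else 0 with hXh
  have hXhm : ∀ n, Measurable (Xh n) := by
    intro n
    by_cases hn : n ∈ V
    · simp only [hXh, dif_pos hn]
      exact (Complex.measurable_ofReal.comp (measurable_pi_apply _)).add
        ((Complex.measurable_ofReal.comp (measurable_pi_apply _)).mul_const _)
    · simp only [hXh, dif_neg hn]
      exact measurable_const
  set G : (κ → ℝ) → ℂ := fun x =>
    Xh n₁ x * Xh n₁' x * (starRingEnd ℂ) (Xh n₁'' x) *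
      (starRingEnd ℂ) (Xh n₂ x) * (starRingEnd ℂ) (Xh n₂' x) * Xh n₂'' x with hG
  have hGm : Measurable G :=
    (((((hXhm n₁).mul (hXhm n₁')).mul
      (continuous_star.measurable.comp (hXhm n₁''))).mul
      (continuous_star.measurable.comp (hXhm n₂))).mul
      (continuous_star.measurable.comp (hXhm n₂'))).mul (hXhm n₂'')
  have hcoord : ∀ n (hn : n ∈ V) ω, Xh n (fun p => Z p ω) = X n ω := by
    intro n hn ω
    rw [hX]
    simp only [hXh, dif_pos hn, hZ]
  -- rewrite the integral
  have hrw : (∫ ω, X n₁ ω * X n₁' ω * (starRingEnd ℂ) (X n₁'' ω) *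
        (starRingEnd ℂ) (X n₂ ω) * (starRingEnd ℂ) (X n₂' ω) * X n₂'' ω ∂P)
      = ∫ x, G x ∂μ := by
    have hfun : (fun ω => X n₁ ω * X n₁' ω * (starRingEnd ℂ) (X n₁'' ω) *
        (starRingEnd ℂ) (X n₂ ω) * (starRingEnd ℂ) (X n₂' ω) * X n₂'' ω)
        = fun ω => G (fun p => Z p ω) := by
      funext ω
      simp only [hG]
      rw [hcoord n₁ hn1 ω, hcoord n₁' hn1' ω, hcoord n₁'' hn1'' ω,
        hcoord n₂ hn2 ω, hcoord n₂' hn2' ω, hcoord n₂'' hn2'' ω]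
    rw [hfun, ← hφ]
    rw [integral_map (measurable_pi_lambda _ hZm).aemeasurable]
    rw [hφ]
    exact hGm.aestronglyMeasurable
  rw [hrw]
  -- the rotation map
  set A : κ := (⟨v, hvV⟩, false) with hA
  set B : κ := (⟨v, hvV⟩, true) with hB
  have hAB : A ≠ B := fun hcon => Bool.noConfusion (congrArg Prod.snd hcon)
  set T : (κ → ℝ) → (κ → ℝ) :=
    fun x p => if p = A then -(x B) else if p = B then x A else x p with hTdef
  have hTmap : μ.map T = μ := pi_gauss_invariant A B hAB
  have hTm : Measurable T := measurable_T A B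
  -- how Xh transforms under T
  have hXhT : ∀ n x, Xh n (T x) = (if v = n then Complex.I else 1) * Xh n x := by
    intro n x
    by_cases hn : n ∈ V
    · by_cases hnv : v = n
      · subst hnv
        have e1 : ((⟨v, hn⟩ : {x // x ∈ V}), false) = A := rfl
        have e2 : ((⟨v, hn⟩ : {x // x ∈ V}), true) = B := rfl
        have t1 : T x (⟨v, hn⟩, false) = -(x B) := by
          rw [e1]; simp [hTdef]
        have t2 : T x (⟨v, hn⟩, true) = x A := by
          rw [e2]; simp [hTdef, hAB.symm]
        have hxA : x (⟨v, hn⟩, false) = x A := by rw [e1]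
        have hxB : x (⟨v, hn⟩, true) = x B := by rw [e2]
        simp only [hXh, dif_pos hn, t1, t2, hxA, hxB, if_pos rfl]
        push_cast
        linear_combination (-(x B : ℂ)) * Complex.I_sq
      · have e1 : ((⟨n, hn⟩ : {x // x ∈ V}), false) ≠ A := by
          intro hcon
          exact hnv (congrArg (fun p => (p.1 : I)) hcon).symm
        have e2 : ((⟨n, hn⟩ : {x // x ∈ V}), true) ≠ B := by
          intro hcon
          exact hnv (congrArg (fun p => (p.1 : I)) hcon).symm
        have e3 : ((⟨n, hn⟩ : {x // x ∈ V}), false) ≠ B := by simp [hB]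
        have e4 : ((⟨n, hn⟩ : {x // x ∈ V}), true) ≠ A := by simp [hA]
        simp only [hXh, dif_pos hn, hTdef, if_neg e1, if_neg e2, if_neg e3, if_neg e4,
          if_neg hnv, one_mul]
    · have hnv : v ≠ n := by
        intro hcon
        exact hn (hcon ▸ hvV)
      simp only [hXh, dif_neg hn, if_neg hnv, mul_zero, one_mul]
  have hXhTc : ∀ n x, (starRingEnd ℂ) (Xh n (T x))
      = (if v = n then -Complex.I else 1) * (starRingEnd ℂ) (Xh n x) := by
    intro n x
    rw [hXhT, map_mul]
    congr 1
    split_ifs <;> simp [Complex.conj_I]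
  -- count identities
  have hacount : (Complex.I : ℂ) ^ a
      = (if v = n₁ then Complex.I else 1) * (if v = n₁' then Complex.I else 1) *
        (if v = n₂'' then Complex.I else 1) := by
    rw [hadef]
    simp only [Multiset.insert_eq_cons, Multiset.count_cons, Multiset.count_singleton]
    split_ifs <;> ring
  have hbcount : ((-Complex.I : ℂ)) ^ b
      = (if v = n₁'' then -Complex.I else 1) * (if v = n₂ then -Complex.I else 1) *
        (if v = n₂' then -Complex.I else 1) := by
    rw [hbdef]
    simp only [Multiset.insert_eq_cons, Multiset.count_cons, Multiset.count_singleton]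
    split_ifs <;> ring
  have hGT : ∀ x, G (T x) = (Complex.I ^ a * (-Complex.I) ^ b) * G x := by
    intro x
    simp only [hG]
    rw [hXhT n₁ x, hXhT n₁' x, hXhT n₂'' x, hXhTc n₁'' x, hXhTc n₂ x, hXhTc n₂' x,
      hacount, hbcount]
    ring
  -- conclude
  have hJ : (∫ x, G x ∂μ) = (Complex.I ^ a * (-Complex.I) ^ b) * ∫ x, G x ∂μ := by
    conv_lhs => rw [← hTmap]
    rw [integral_map hTm.aemeasurable (hTmap.symm ▸ hGm.aestronglyMeasurable)]
    simp_rw [hGT]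
    rw [integral_const_mul]
  have hcne := I_pow_ne_one ha3 hb3 hv
  have hzero : (1 - Complex.I ^ a * (-Complex.I) ^ b) * (∫ x, G x ∂μ) = 0 := by
    rw [sub_mul, one_mul, ← hJ, sub_self]
  rcases mul_eq_zero.1 hzero with hc | hc
  · exact absurd (by linear_combination -hc : Complex.I ^ a * (-Complex.I) ^ b = 1) hcne
  · exact hc
end

section
/- (Yudovich-type uniqueness estimate) Let T₁ > 0 and φ : [0, T₁] → [0, ∞) be continuous with φ(0) = 0, and suppose there exists M > 0 such that for every p ≥ 2 and every t ∈ [0, T₁], φ'(t) ≤ M √p φ(t)^{1 − 1/p}. Then φ ≡ 0 on [0, T₁]. -/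
open Real Set Filter

/-- Key comparison: for fixed `p ≥ 2` and `ε > 0`, `φ t ≤ (ε + (2M/√p) t)^p`. -/
lemma yudovich_key (T₁ M : ℝ) (hT : 0 < T₁) (hM : 0 < M)
    (φ φ' : ℝ → ℝ)
    (hcont : ContinuousOn φ (Icc 0 T₁))
    (h0 : φ 0 = 0)
    (hderiv : ∀ t ∈ Icc 0 T₁, HasDerivWithinAt φ (φ' t) (Icc 0 T₁) t)
    (hineq : ∀ p : ℝ, 2 ≤ p → ∀ t ∈ Icc 0 T₁,
      φ' t ≤ M * Real.sqrt p * φ t ^ (1 - 1 / p))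
    (p : ℝ) (hp : 2 ≤ p) (ε : ℝ) (hε : 0 < ε) :
    ∀ t ∈ Icc 0 T₁, φ t ≤ (ε + (2 * M / Real.sqrt p) * t) ^ p := by
  have hp0 : 0 < p := by linarith
  have hsp : 0 < Real.sqrt p := Real.sqrt_pos.mpr hp0
  set c : ℝ := 2 * M / Real.sqrt p with hc
  have hc0 : 0 < c := by positivity
  set B : ℝ → ℝ := fun t => (ε + c * t) ^ p with hB
  set B' : ℝ → ℝ := fun t => c * p * (ε + c * t) ^ (p - 1) with hB'
  have hBd : ∀ x : ℝ, HasDerivAt B (B' x) x := by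
    intro x
    have h1 : HasDerivAt (fun y : ℝ => ε + c * y) c x := by
      simpa using ((hasDerivAt_id x).const_mul c).const_add ε
    exact h1.rpow_const (Or.inr (by linarith))
  have hf' : ∀ x ∈ Ico 0 T₁, HasDerivWithinAt φ (φ' x) (Ici x) x := by
    intro x hx
    have hmem : Icc x T₁ ∈ nhdsWithin x (Ici x) :=
      Icc_mem_nhdsGE_of_mem ⟨le_refl x, hx.2⟩
    exact ((hderiv x ⟨hx.1, hx.2.le⟩).mono (Icc_subset_Icc hx.1 le_rfl)).mono_of_mem_nhdsWithin hmem
  have ha : φ 0 ≤ B 0 := by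
    rw [h0, hB]
    simp only [mul_zero, add_zero]
    positivity
  have bound : ∀ x ∈ Ico 0 T₁, φ x = B x → φ' x < B' x := by
    intro x hx hcontact
    have hx' : x ∈ Icc 0 T₁ := ⟨hx.1, hx.2.le⟩
    have hbase : 0 < ε + c * x := by
      have : 0 ≤ c * x := mul_nonneg hc0.le hx.1
      linarith
    have hpow : B x ^ (1 - 1 / p) = (ε + c * x) ^ (p - 1) := by
      show ((ε + c * x) ^ p) ^ (1 - 1 / p) = (ε + c * x) ^ (p - 1)
      rw [← Real.rpow_mul hbase.le]
      congr 1
      field_simp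
    calc φ' x ≤ M * Real.sqrt p * φ x ^ (1 - 1 / p) := hineq p hp x hx'
      _ = M * Real.sqrt p * (ε + c * x) ^ (p - 1) := by rw [hcontact, hpow]
      _ < B' x := by
          have hpos : (0:ℝ) < (ε + c * x) ^ (p - 1) := Real.rpow_pos_of_pos hbase _
          have hcp : c * p = 2 * M * Real.sqrt p := by
            rw [hc]
            field_simp
            nlinarith [Real.mul_self_sqrt hp0.le]
          show _ < c * p * (ε + c * x) ^ (p - 1)
          rw [hcp]
          nlinarith [mul_pos (mul_pos hM hsp) hpos]
  have := image_le_of_deriv_right_lt_deriv_boundary hcont hf' ha hBd bound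
  intro t ht
  exact this ht

/-- Yudovich-type uniqueness estimate: if `φ : [0,T₁] → [0,∞)` is continuous,
`φ(0) = 0`, `φ` is differentiable on `[0,T₁]` with derivative `φ'`, and for some
`M > 0` one has `φ'(t) ≤ M √p · φ(t)^{1-1/p}` for every `p ≥ 2` and every
`t ∈ [0,T₁]`, then `φ ≡ 0` on `[0,T₁]`. -/
theorem yudovich_uniqueness (T₁ M : ℝ) (hT : 0 < T₁) (hM : 0 < M)
    (φ φ' : ℝ → ℝ)
    (hcont : ContinuousOn φ (Icc 0 T₁))
    (hnonneg : ∀ t ∈ Icc 0 T₁, 0 ≤ φ t)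
    (h0 : φ 0 = 0)
    (hderiv : ∀ t ∈ Icc 0 T₁, HasDerivWithinAt φ (φ' t) (Icc 0 T₁) t)
    (hineq : ∀ p : ℝ, 2 ≤ p → ∀ t ∈ Icc 0 T₁,
      φ' t ≤ M * Real.sqrt p * φ t ^ (1 - 1 / p)) :
    ∀ t ∈ Icc 0 T₁, φ t = 0 := by
  intro t ht
  have ht0 : 0 ≤ t := ht.1
  -- Step 1: remove ε
  have h1 : ∀ p : ℝ, 2 ≤ p → φ t ≤ ((2 * M / Real.sqrt p) * t) ^ p := by
    intro p hp
    set c : ℝ := 2 * M / Real.sqrt p with hc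
    have hcont' : Continuous (fun ε : ℝ => (ε + c * t) ^ p) :=
      (continuous_id.add continuous_const).rpow_const (fun x => Or.inr (by linarith))
    have htend : Tendsto (fun ε : ℝ => (ε + c * t) ^ p) (nhdsWithin 0 (Ioi 0))
        (nhds ((c * t) ^ p)) := by
      have := (hcont'.tendsto 0).mono_left (nhdsWithin_le_nhds (s := Ioi (0:ℝ)))
      simpa using this
    refine ge_of_tendsto htend ?_
    filter_upwards [self_mem_nhdsWithin] with ε hε
    exact yudovich_key T₁ M hT hM φ φ' hcont h0 hderiv hineq p hp ε hε t ht
  -- Step 2: for large p, the bound is at most (1/2)^p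
  have h2 : ∀ᶠ p : ℝ in atTop, φ t ≤ (1/2 : ℝ) ^ p := by
    filter_upwards [eventually_ge_atTop (max 2 ((4 * M * t) ^ 2 + 1))] with p hp
    have hp2 : 2 ≤ p := le_trans (le_max_left _ _) hp
    have hp0 : 0 < p := by linarith
    have hsp : 0 < Real.sqrt p := Real.sqrt_pos.mpr hp0
    have hsq : 4 * M * t ≤ Real.sqrt p := by
      have hle := le_trans (le_max_right 2 ((4 * M * t) ^ 2 + 1)) hp
      have h' : Real.sqrt ((4 * M * t) ^ 2) ≤ Real.sqrt p := Real.sqrt_le_sqrt (by linarith)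
      rwa [Real.sqrt_sq (by positivity)] at h'
    have hbase : (2 * M / Real.sqrt p) * t ≤ 1/2 := by
      rw [div_mul_eq_mul_div, div_le_iff₀ hsp]
      nlinarith
    have hbnonneg : 0 ≤ (2 * M / Real.sqrt p) * t := by positivity
    calc φ t ≤ ((2 * M / Real.sqrt p) * t) ^ p := h1 p hp2
      _ ≤ (1/2 : ℝ) ^ p := Real.rpow_le_rpow hbnonneg hbase hp0.le
  -- Step 3: let p → ∞
  have h3 : Tendsto (fun p : ℝ => (1/2 : ℝ) ^ p) atTop (nhds 0) :=
    tendsto_rpow_atTop_of_base_lt_one _ (by norm_num) (by norm_num)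
  have : φ t ≤ 0 := ge_of_tendsto h3 h2
  exact le_antisymm this (hnonneg t ht)
end
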